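/- Let ℛ be a linear growing TRS over 𝓕 and let 𝒟(ℛ) be the powerset-pair automaton built from 𝒞'_{NF_{ℛ•}}(ℛ). Let s ∈ 𝒯(𝓕) be such that s[•]_p ∈ (→_ℛ*)[NF_{ℛ•}] for every redex position p of s. Then there exists a set P ⊆ Q_f such that s →_{Γ_𝒟}* [S,P] with S = s↓. -/

import Mathlib

set_option maxHeartbeats 1000000

/-! ## Terms over a signature -/

/-- Terms over a signature given by a type `F` of function symbols together with
an arity function `ar`; variables are natural numbers. -/
inductive Term (F : Type) (ar : F → ℕ) : Type
  | var : ℕ → Term F ar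
  | app : (f : F) → (Fin (ar f) → Term F ar) → Term F ar

namespace Term

variable {F : Type} {ar : F → ℕ}

/-- The (finite) set of variables of a term. -/
def vars : Term F ar → Finset ℕ
  | var n => {n}
  | app _ ts => Finset.univ.biUnion fun i => (ts i).vars

/-- A term is ground if it contains no variables. -/
def Ground (t : Term F ar) : Prop := t.vars = ∅

/-- The number of occurrences of the variable `n` in a term. -/
def count (n : ℕ) : Term F ar → ℕ
  | var m => if m = n then 1 else 0
  | app _ ts => ∑ i, (ts i).count n

/-- A term is linear if no variable occurs twice in it. -/
def Linear (t : Term F ar) : Prop := ∀ n, t.count n ≤ 1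

/-- Applying a substitution to a term. -/
def subst (σ : ℕ → Term F ar) : Term F ar → Term F ar
  | var n => σ n
  | app f ts => app f fun i => (ts i).subst σ

/-- The subterm at a position (a list of argument indices), if the position is valid. -/
def subtermAt : Term F ar → List ℕ → Option (Term F ar)
  | t, [] => some t
  | var _, _ :: _ => none
  | app f ts, i :: p => if h : i < ar f then (ts ⟨i, h⟩).subtermAt p else none

/-- Replacing the subterm at a position, if the position is valid. -/
def replaceAt : Term F ar → List ℕ → Term F ar → Option (Term F ar)
  | _, [], u => some u
  | var _, _ :: _, _ => none
  | app f ts, i :: p, u =>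
      if h : i < ar f then
        ((ts ⟨i, h⟩).replaceAt p u).map fun s => app f (Function.update ts ⟨i, h⟩ s)
      else none

/-- `s.IsSubtermOf t` : `s` is a subterm of `t`. -/
def IsSubtermOf (s t : Term F ar) : Prop := ∃ p, t.subtermAt p = some s

/-- Relabelling of function symbols along an arity-preserving map of signatures. -/
def relabel {G : Type} {arG : G → ℕ} (φ : F → G) (h : ∀ f, arG (φ f) = ar f) :
    Term F ar → Term G arG
  | var n => var n
  | app f ts => app (φ f) fun i => (ts (Fin.cast (h f) i)).relabel φ h

end Term

/-! ## Rewriting -/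

/-- One-step rewriting with a set of rewrite rules: there are a position `p` of `s`,
a rule `(l, r)` and a substitution `σ` with `s|_p = lσ` and `t = s[rσ]_p`. -/
def Rewrites {F : Type} {ar : F → ℕ} (R : Set (Term F ar × Term F ar))
    (s t : Term F ar) : Prop :=
  ∃ (p : List ℕ) (l r : Term F ar) (σ : ℕ → Term F ar),
    (l, r) ∈ R ∧ s.subtermAt p = some (l.subst σ) ∧ s.replaceAt p (r.subst σ) = some t

/-- Many-step rewriting (reflexive–transitive closure). -/
abbrev RewritesStar {F : Type} {ar : F → ℕ} (R : Set (Term F ar × Term F ar)) :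
    Term F ar → Term F ar → Prop :=
  Relation.ReflTransGen (Rewrites R)

/-- A term rewriting system: a finite set of rules whose left-hand sides are not variables. -/
structure TRS (F : Type) (ar : F → ℕ) where
  rules : Set (Term F ar × Term F ar)
  finite : rules.Finite
  lhs_not_var : ∀ lr ∈ rules, ∀ n, lr.1 ≠ Term.var n

namespace TRS

variable {F : Type} {ar : F → ℕ}

def LeftLinear (R : TRS F ar) : Prop := ∀ lr ∈ R.rules, lr.1.Linear

def RightLinear (R : TRS F ar) : Prop := ∀ lr ∈ R.rules, lr.2.Linear

/-- A TRS is linear if all left- and right-hand sides are linear terms. -/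
def IsLinear (R : TRS F ar) : Prop := R.LeftLinear ∧ R.RightLinear

/-- A TRS is growing if every variable occurring both in the left- and the right-hand
side of a rule occurs at depth 1 in the left-hand side. -/
def Growing (R : TRS F ar) : Prop :=
  ∀ lr ∈ R.rules, ∀ n ∈ lr.1.vars, n ∈ lr.2.vars →
    ∀ (f : F) (ts : Fin (ar f) → Term F ar), lr.1 = Term.app f ts →
      ∀ i, n ∈ (ts i).vars → ts i = Term.var n

/-- A redex is an instance of a left-hand side. -/
def IsRedex (R : TRS F ar) (s : Term F ar) : Prop :=
  ∃ lr ∈ R.rules, ∃ σ : ℕ → Term F ar, s = lr.1.subst σ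

/-- `p` is a redex position of `s`. -/
def RedexPos (R : TRS F ar) (s : Term F ar) (p : List ℕ) : Prop :=
  ∃ u, s.subtermAt p = some u ∧ R.IsRedex u

def Reducible (R : TRS F ar) (s : Term F ar) : Prop := ∃ p, R.RedexPos s p

/-- A term is root-stable if it cannot be rewritten to a redex. -/
def RootStable (R : TRS F ar) (s : Term F ar) : Prop :=
  ¬ ∃ t, RewritesStar R.rules s t ∧ R.IsRedex t

/-- Ground normal forms. -/
def NFset (R : TRS F ar) : Set (Term F ar) := { t | t.Ground ∧ ¬ R.Reducible t }

/-- Ground redexes. -/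
def RedexSet (R : TRS F ar) : Set (Term F ar) := { t | t.Ground ∧ R.IsRedex t }

/-- Root-stable ground terms. -/
def RSset (R : TRS F ar) : Set (Term F ar) := { t | t.Ground ∧ R.RootStable t }

/-- Relabelling a TRS along an arity-preserving map of signatures. -/
def relabel {G : Type} {arG : G → ℕ} (R : TRS F ar) (φ : F → G)
    (h : ∀ f, arG (φ f) = ar f) : TRS G arG where
  rules := (fun lr => (lr.1.relabel φ h, lr.2.relabel φ h)) '' R.rules
  finite := R.finite.image _
  lhs_not_var := by
    rintro lr ⟨lr0, h0, rfl⟩ n hn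
    dsimp only at hn
    cases h1 : lr0.1 with
    | var m => exact absurd h1 (R.lhs_not_var lr0 h0 m)
    | app f ts =>
        rw [h1] at hn
        simp only [Term.relabel] at hn
        exact nomatch hn

end TRS

/-! ## Tree automata -/

/-- A transition rule `f(q₁,…,qₙ) → q` of a bottom-up tree automaton. -/
abbrev TARule (F : Type) (ar : F → ℕ) (Q : Type) : Type :=
  (f : F) × ((Fin (ar f) → Q) × Q)

/-- A (finite bottom-up) tree automaton without ε-transitions. -/
structure TreeAutomaton (F : Type) (ar : F → ℕ) (Q : Type) where
  trans : Set (TARule F ar Q)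
  final : Set Q

/-- `Reaches Δ t q` : the ground term `t` rewrites to the state `q` using the
transition rules `Δ`. -/
inductive Reaches {F : Type} {ar : F → ℕ} {Q : Type} (Δ : Set (TARule F ar Q)) :
    Term F ar → Q → Prop
  | app {f : F} {ts : Fin (ar f) → Term F ar} {qs : Fin (ar f) → Q} {q : Q} :
      (∀ i, Reaches Δ (ts i) (qs i)) → (⟨f, qs, q⟩ : TARule F ar Q) ∈ Δ →
      Reaches Δ (Term.app f ts) q

/-- `ReachesT Δ θ t q` : the term `t`, whose variables are interpreted as the states
given by `θ`, rewrites to the state `q` using the transition rules `Δ`. -/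
inductive ReachesT {F : Type} {ar : F → ℕ} {Q : Type} (Δ : Set (TARule F ar Q))
    (θ : ℕ → Q) : Term F ar → Q → Prop
  | var (n : ℕ) : ReachesT Δ θ (Term.var n) (θ n)
  | app {f : F} {ts : Fin (ar f) → Term F ar} {qs : Fin (ar f) → Q} {q : Q} :
      (∀ i, ReachesT Δ θ (ts i) (qs i)) → (⟨f, qs, q⟩ : TARule F ar Q) ∈ Δ →
      ReachesT Δ θ (Term.app f ts) q

/-- The language of a tree automaton: all ground terms reaching a final state. -/
def Lang {F : Type} {ar : F → ℕ} {Q : Type} (A : TreeAutomaton F ar Q) :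
    Set (Term F ar) :=
  { t | t.Ground ∧ ∃ q ∈ A.final, Reaches A.trans t q }

/-- A set of ground terms is recognizable if it is the language of some finite
tree automaton. -/
def Recognizable {F : Type} {ar : F → ℕ} (T : Set (Term F ar)) : Prop :=
  ∃ (Q : Type) (_ : Fintype Q) (A : TreeAutomaton F ar Q), T = Lang A

/-- The set of states occurring in a set of transition rules. -/
def statesOf {F : Type} {ar : F → ℕ} {Q : Type} (Γ : Set (TARule F ar Q)) : Set Q :=
  { q | ∃ ρ ∈ Γ, ρ.2.2 = q ∨ ∃ i, ρ.2.1 i = q }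

/-! ## The automaton `ℬ(ℛ)` -/

/-- The canonical representative of the state `⟨t⟩` of `ℬ(ℛ)`: all variables are
identified with the single state `⟨x⟩`, represented by `var 0`. -/
def stPattern {F : Type} {ar : F → ℕ} : Term F ar → Term F ar
  | Term.var _ => Term.var 0
  | Term.app f ts => Term.app f ts

/-- `S_ℛ`: the set of all subterms of arguments of left-hand sides of `ℛ`. -/
def SR {F : Type} {ar : F → ℕ} (R : TRS F ar) : Set (Term F ar) :=
  { s | ∃ lr ∈ R.rules, ∃ (f : F) (ts : Fin (ar f) → Term F ar),
        lr.1 = Term.app f ts ∧ ∃ i, s.IsSubtermOf (ts i) }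

/-- The representatives of the states of `ℬ(ℛ)`: the patterns of terms of `S_ℛ`,
together with `⟨x⟩`. -/
def BStateSet {F : Type} {ar : F → ℕ} (R : TRS F ar) : Set (Term F ar) :=
  stPattern '' SR R ∪ {Term.var 0}

/-- The matching rules of `ℬ(ℛ)` (with states encoded by `enc`):
`f(⟨t₁⟩,…,⟨tₙ⟩) → ⟨t⟩` for every `t = f(t₁,…,tₙ) ∈ S_ℛ`. -/
def BMatch {F : Type} {ar : F → ℕ} {Q : Type} (R : TRS F ar) (enc : Term F ar → Q) :
    Set (TARule F ar Q) :=
  { ρ | ∃ (f : F) (ts : Fin (ar f) → Term F ar), Term.app f ts ∈ SR R ∧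
        ρ = ⟨f, fun i => enc (stPattern (ts i)), enc (Term.app f ts)⟩ }

/-- The propagation rules `f(⟨x⟩,…,⟨x⟩) → ⟨x⟩` for every function symbol `f`. -/
def BProp {F : Type} {ar : F → ℕ} {Q : Type} (enc : Term F ar → Q) :
    Set (TARule F ar Q) :=
  { ρ | ∃ f : F, ρ = ⟨f, fun _ => enc (Term.var 0), enc (Term.var 0)⟩ }

/-- The transition rules of the automaton `ℬ(ℛ)`. -/
def BTrans {F : Type} {ar : F → ℕ} {Q : Type} (R : TRS F ar) (enc : Term F ar → Q) :
    Set (TARule F ar Q) :=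
  BMatch R enc ∪ BProp enc

/-- `Σ(t)`: the set of ground instances of the term `t`. -/
def GInst {F : Type} {ar : F → ℕ} (t : Term F ar) : Set (Term F ar) :=
  { s | s.Ground ∧ ∃ σ, s = t.subst σ }

/-! ## Saturation -/

/-- The state `qᵢ` associated to the argument `lᵢ` of a left-hand side in the
saturation rule: `lᵢθ` if `lᵢ` is a variable occurring in `r` (whose variable set
is `rv`), and `⟨lᵢ⟩` otherwise. -/
def satArg {F : Type} {ar : F → ℕ} {Q : Type} (enc : Term F ar → Q) (θ : ℕ → Q)
    (rv : Finset ℕ) : Term F ar → Q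
  | Term.var n => if n ∈ rv then θ n else enc (Term.var 0)
  | Term.app f ts => enc (Term.app f ts)

/-- One step of the saturation process: add all transition rules `f(q₁,…,qₙ) → q`
obtained from a rewrite rule `f(l₁,…,lₙ) → r` and a state substitution `θ`
(with values among the states `Qc` of the automaton) such that `rθ →_Γ* q`. -/
def satStep {F : Type} {ar : F → ℕ} {Q : Type} (R : TRS F ar) (enc : Term F ar → Q)
    (Qc : Set Q) (Γ : Set (TARule F ar Q)) : Set (TARule F ar Q) :=
  Γ ∪ { ρ | ∃ (f : F) (ls : Fin (ar f) → Term F ar) (r : Term F ar) (θ : ℕ → Q) (q : Q),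
        (Term.app f ls, r) ∈ R.rules ∧ (∀ n ∈ r.vars, θ n ∈ Qc) ∧ ReachesT Γ θ r q ∧
        ρ = ⟨f, fun i => satArg enc θ r.vars (ls i), q⟩ }

/-- The saturated set of transition rules: the closure of `Γ0` under the saturation
inference rule. -/
def satGamma {F : Type} {ar : F → ℕ} {Q : Type} (R : TRS F ar) (enc : Term F ar → Q)
    (Qc : Set Q) (Γ0 : Set (TARule F ar Q)) : Set (TARule F ar Q) :=
  ⋃ n, (satStep R enc Qc)^[n] Γ0

/-! ## The automaton `𝒞_T(ℛ)` and its extension `𝒞'_T(ℛ)` -/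

/-- The data of the construction of the automaton `𝒞_T(ℛ)`: an automaton `𝒜_T`
recognizing `T` with all states accessible and state set `QA`, together with an
encoding `enc` of the states `⟨t⟩` of `ℬ(ℛ)` into the common state type `Q`, such
that every state common to `𝒜_T` and `ℬ(ℛ)` accepts the same set of terms in both
automata. -/
structure CSetup {G : Type} [Fintype G] {arG : G → ℕ} (Q : Type) [Fintype Q]
    (Rg : TRS G arG) (T : Set (Term G arG)) where
  enc : Term G arG → Q
  A : TreeAutomaton G arG Q
  QA : Set Q
  henc : Set.InjOn enc (BStateSet Rg)
  hAstates : ∀ ρ ∈ A.trans, ρ.2.2 ∈ QA ∧ ∀ i, ρ.2.1 i ∈ QA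
  hfinal : A.final ⊆ QA
  hacc : ∀ q ∈ QA, ∃ s : Term G arG, s.Ground ∧ Reaches A.trans s q
  hground : ∃ s : Term G arG, s.Ground
  hshared : ∀ q ∈ QA ∩ enc '' BStateSet Rg, ∀ s : Term G arG,
      Reaches A.trans s q ↔ Reaches (BTrans Rg enc) s q
  hT : T = Lang A

namespace CSetup

variable {G : Type} [Fintype G] {arG : G → ℕ} {Q : Type} [Fintype Q]
  {Rg : TRS G arG} {T : Set (Term G arG)}

/-- The set of states of the automaton `𝒞_T(ℛ)`. -/
def Qstates (C : CSetup Q Rg T) : Set Q := C.QA ∪ C.enc '' BStateSet Rg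

/-- The transition rules of `𝒞_T(ℛ)` before saturation: the union of `𝒜_T` and `ℬ(ℛ)`. -/
def Γ0 (C : CSetup Q Rg T) : Set (TARule G arG Q) := C.A.trans ∪ BTrans Rg C.enc

/-- The transition rules of `𝒞_T(ℛ)` after saturation. -/
def Γsat (C : CSetup Q Rg T) : Set (TARule G arG Q) :=
  satGamma Rg C.enc C.Qstates C.Γ0

end CSetup

/-- The redex rules `f(⟪l₁⟫,…,⟪lₙ⟫) → q_r` for every left-hand side `f(l₁,…,lₙ)`. -/
def RedexRules {F : Type} {ar : F → ℕ} {Q : Type} (R : TRS F ar)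
    (enc2 : Term F ar → Q) (qr : Q) : Set (TARule F ar Q) :=
  { ρ | ∃ (f : F) (ls : Fin (ar f) → Term F ar) (r : Term F ar),
        (Term.app f ls, r) ∈ R.rules ∧
        ρ = ⟨f, fun i => enc2 (stPattern (ls i)), qr⟩ }

/-- The rules `f(⟨x⟩,…,q_r,…,⟨x⟩) → q_r`. -/
def QrProp {F : Type} {ar : F → ℕ} {Q : Type} (enc : Term F ar → Q) (qr : Q) :
    Set (TARule F ar Q) :=
  { ρ | ∃ (f : F) (j : Fin (ar f)),
        ρ = ⟨f, fun i => if i = j then qr else enc (Term.var 0), qr⟩ }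

/-- The data of the construction of the automaton `𝒞'_T(ℛ)`: `𝒞_T(ℛ)` extended with
a fresh copy `⟪t⟫` (encoded by `enc2`, with `⟪x⟫ = ⟨x⟩`) of the states of `ℬ(ℛ)` and
a fresh state `q_r`. -/
structure CpSetup {G : Type} [Fintype G] {arG : G → ℕ} (Q : Type) [Fintype Q]
    (Rg : TRS G arG) (T : Set (Term G arG)) extends CSetup Q Rg T where
  enc2 : Term G arG → Q
  qr : Q
  henc2 : Set.InjOn enc2 (BStateSet Rg)
  hx : enc2 (Term.var 0) = enc (Term.var 0)
  hfresh : (enc2 '' (BStateSet Rg \ {Term.var 0}) ∪ {qr}) ∩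
              (QA ∪ enc '' BStateSet Rg) = ∅
  hqr : qr ∉ enc2 '' (BStateSet Rg \ {Term.var 0})

namespace CpSetup

variable {G : Type} [Fintype G] {arG : G → ℕ} {Q : Type} [Fintype Q]
  {Rg : TRS G arG} {T : Set (Term G arG)}

/-- The transition rules `Γ'` of the automaton `𝒞'_T(ℛ)`. -/
def Γ' (C : CpSetup Q Rg T) : Set (TARule G arG Q) :=
  C.toCSetup.Γsat ∪ BMatch Rg C.enc2 ∪ RedexRules Rg C.enc2 C.qr ∪ QrProp C.enc C.qr

end CpSetup

/-! ## The signature `𝓖 = 𝓕 ∪ {•}` -/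

/-- The arity function of the extended signature `𝓕 ∪ {•}` (with `•` the fresh
constant `none`). -/
def arB {F : Type} (ar : F → ℕ) : Option F → ℕ
  | none => 0
  | some f => ar f

/-- The term `•`. -/
def bulletTm {F : Type} {ar : F → ℕ} : Term (Option F) (arB ar) :=
  Term.app none Fin.elim0

/-- The embedding of `𝒯(𝓕)`-terms into terms over `𝓕 ∪ {•}`. -/
def liftB {F : Type} {ar : F → ℕ} : Term F ar → Term (Option F) (arB ar) :=
  Term.relabel some (fun _ => rfl)

/-- A TRS over `𝓕` viewed as a TRS over `𝓕 ∪ {•}`. -/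
def TRS.liftB {F : Type} {ar : F → ℕ} (R : TRS F ar) : TRS (Option F) (arB ar) :=
  R.relabel some (fun _ => rfl)

/-- The TRS `ℛ• = ℛ ∪ {• → •}` over the signature `𝓕 ∪ {•}`. -/
def TRS.bullet {F : Type} {ar : F → ℕ} (R : TRS F ar) : TRS (Option F) (arB ar) where
  rules := R.liftB.rules ∪ {(bulletTm, bulletTm)}
  finite := R.liftB.finite.union (Set.finite_singleton _)
  lhs_not_var := by
    rintro lr (h | h) n hn
    · exact R.liftB.lhs_not_var lr h n hn
    · rw [Set.mem_singleton_iff] at h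
      rw [h] at hn
      exact absurd hn (by simp [bulletTm])

/-! ## The automaton `𝒟(ℛ)` -/

/-- For a symbol `g` and sets of states `Ss` for the arguments, the set
`g(S₁,…,Sₙ)↓` of states reachable from `g` applied to states chosen from the `Ssᵢ`. -/
def oneStep {G : Type} {arG : G → ℕ} {Q : Type} (Γ : Set (TARule G arG Q)) (g : G)
    (Ss : Fin (arG g) → Set Q) : Set Q :=
  { q | ∃ qs : Fin (arG g) → Q, (∀ i, qs i ∈ Ss i) ∧ (⟨g, qs, q⟩ : TARule G arG Q) ∈ Γ }

/-- `t↓` for a ground term `t`: the set of states reachable from `t`. -/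
def dn {G : Type} {arG : G → ℕ} {Q : Type} (Γ : Set (TARule G arG Q))
    (t : Term G arG) : Set Q :=
  { q | Reaches Γ t q }

/-- There is a rewrite rule with left-hand side `g(l₁,…,lₙ)` such that
`⟪lᵢ⟫ ∈ Ssᵢ` for all `i`. -/
def LhsMatch {G : Type} {arG : G → ℕ} {Q : Type} (Rg : TRS G arG)
    (enc2 : Term G arG → Q) (g : G) (Ss : Fin (arG g) → Set Q) : Prop :=
  ∃ (ls : Fin (arG g) → Term G arG) (r : Term G arG),
    (Term.app g ls, r) ∈ Rg.rules ∧ ∀ i, enc2 (stPattern (ls i)) ∈ Ss i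

/-- The transition rules of the automaton `𝒟(ℛ)` over `𝓕`, built from the transition
rules `Γ'` of `𝒞'_{NF}(ℛ)` over `𝓕 ∪ {•}`. -/
def DTrans {F : Type} {ar : F → ℕ} {Q : Type} (Rb : TRS (Option F) (arB ar))
    (Γ' : Set (TARule (Option F) (arB ar) Q))
    (enc enc2 : Term (Option F) (arB ar) → Q) :
    Set (TARule F ar (Set Q × Set Q)) :=
  { ρ | ∃ (f : F) (SP : Fin (ar f) → Set Q × Set Q) (P1 P2 : Set Q),
      P1 ⊆ (⋃ i : Fin (ar f), oneStep Γ' (some f)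
              (fun (j : Fin (ar f)) => if j = i then (SP j).2 else (SP j).1)) ∧
      (∀ (i : Fin (ar f)), ∀ q ∈ (SP i).2,
        (P1 ∩ oneStep Γ' (some f) (fun (j : Fin (ar f)) => if j = i then {q} else (SP j).1)).Nonempty) ∧
      ((LhsMatch Rb enc2 (some f) (fun i => (SP i).1) ∧ P2 = {enc (Term.var 0)}) ∨
       (¬ LhsMatch Rb enc2 (some f) (fun i => (SP i).1) ∧ P2 = (∅ : Set Q))) ∧
      ρ = ⟨f, SP, (oneStep Γ' (some f) (fun i => (SP i).1), P1 ∪ P2)⟩ }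

/-- The automaton `𝒟(ℛ)`: final states are the pairs `[S,P]` with `q_r ∈ S` and
`P ⊆ Q_f`. -/
def DAutomaton {F : Type} {ar : F → ℕ} {Q : Type} (Rb : TRS (Option F) (arB ar))
    (Γ' : Set (TARule (Option F) (arB ar) Q))
    (enc enc2 : Term (Option F) (arB ar) → Q) (qr : Q) (Qf : Set Q) :
    TreeAutomaton F ar (Set Q × Set Q) where
  trans := DTrans Rb Γ' enc enc2
  final := { SP | qr ∈ SP.1 ∧ SP.2 ⊆ Qf }

/-! ## Growing approximations -/

/-- `VarRepl t t'` : `t'` is obtained from `t` by replacing occurrences of variables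
by (possibly other) variables. -/
inductive VarRepl {F : Type} {ar : F → ℕ} : Term F ar → Term F ar → Prop
  | var (n m : ℕ) : VarRepl (Term.var n) (Term.var m)
  | app (f : F) (ts ts' : Fin (ar f) → Term F ar) :
      (∀ i, VarRepl (ts i) (ts' i)) → VarRepl (Term.app f ts) (Term.app f ts')

/-- `Rg` is a growing approximation of `R`: a right-linear growing TRS obtained from
`R` by replacing, in each right-hand side, occurrences of variables by variables not
occurring in the corresponding left-hand side. -/
def IsGrowingApprox {F : Type} {ar : F → ℕ} (R Rg : TRS F ar) : Prop :=
  Rg.RightLinear ∧ Rg.Growing ∧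
  (∀ lr ∈ Rg.rules, ∃ lr' ∈ R.rules, lr.1 = lr'.1 ∧ VarRepl lr'.2 lr.2 ∧
      ∀ n ∈ lr.2.vars, n ∉ lr.1.vars) ∧
  (∀ lr ∈ R.rules, ∃ lr' ∈ Rg.rules, lr.1 = lr'.1 ∧ VarRepl lr.2 lr'.2 ∧
      ∀ n ∈ lr'.2.vars, n ∉ lr'.1.vars)

/-! ## The signature `𝓖 = 𝓕 ∪ {f° : f ∈ 𝓕}` -/

/-- The arity function of the signature `𝓕 ∪ {f° : f ∈ 𝓕}` (`inl f` is `f`,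
`inr f` is `f°`). -/
def arC {F : Type} (ar : F → ℕ) : F ⊕ F → ℕ
  | Sum.inl f => ar f
  | Sum.inr f => ar f

/-- The embedding of `𝒯(𝓕)`-terms into terms over `𝓕 ∪ {f° : f ∈ 𝓕}`. -/
def liftC {F : Type} {ar : F → ℕ} : Term F ar → Term (F ⊕ F) (arC ar) :=
  Term.relabel Sum.inl (fun _ => rfl)

/-- `t°`: mark the root symbol of `t`. -/
def circTm {F : Type} {ar : F → ℕ} : Term F ar → Term (F ⊕ F) (arC ar)
  | Term.var n => Term.var n
  | Term.app f ts => Term.app (Sum.inr f) fun i => liftC (ts i)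

/-- A TRS over `𝓕` viewed as a TRS over `𝓕 ∪ {f° : f ∈ 𝓕}`. -/
def TRS.liftC {F : Type} {ar : F → ℕ} (R : TRS F ar) : TRS (F ⊕ F) (arC ar) :=
  R.relabel Sum.inl (fun _ => rfl)

/-- The TRS `𝒮° = 𝒮 ∪ {l° → r | l → r ∈ 𝒮}` over the signature `𝓕 ∪ {f° : f ∈ 𝓕}`. -/
def TRS.circ {F : Type} {ar : F → ℕ} (S : TRS F ar) : TRS (F ⊕ F) (arC ar) where
  rules := S.liftC.rules ∪ (fun lr => (circTm lr.1, _root_.liftC lr.2)) '' S.rules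
  finite := S.liftC.finite.union (S.finite.image _)
  lhs_not_var := by
    rintro lr (h | ⟨lr0, h0, rfl⟩) n hn
    · exact S.liftC.lhs_not_var lr h n hn
    · dsimp only at hn
      cases h1 : lr0.1 with
      | var m => exact absurd h1 (S.lhs_not_var lr0 h0 m)
      | app f ts =>
          rw [h1] at hn
          simp only [circTm] at hn
          exact nomatch hn

/-- The transitions added to `ℬ(𝒮°)` to obtain `𝒜_{REDEX_{𝒮°}}`:
`f(⟨l₁⟩,…,⟨lₙ⟩) → q_f` and `f°(⟨l₁⟩,…,⟨lₙ⟩) → q_f` for each left-hand side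
`f(l₁,…,lₙ)` of a rule of `𝒮`. -/
def CircRedexRules {F : Type} {ar : F → ℕ} {Q : Type} (S : TRS F ar)
    (enc : Term (F ⊕ F) (arC ar) → Q) (qf : Q) : Set (TARule (F ⊕ F) (arC ar) Q) :=
  { ρ | ∃ (f : F) (ls : Fin (ar f) → Term F ar) (r : Term F ar),
      (Term.app f ls, r) ∈ S.rules ∧
      (ρ = ⟨Sum.inl f, fun i => enc (stPattern (liftC (ls i))), qf⟩ ∨
       ρ = ⟨Sum.inr f, fun i => enc (stPattern (liftC (ls i))), qf⟩) }

/-! ## The automaton `𝒟'(ℛ,𝒮)` -/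

/-- The data of the construction of `𝒞'_{RS_{𝒮°}}(ℛ)`: the saturated automaton
`𝒞_{RS_{𝒮°}}(ℛ)`, a fresh copy `⟪t⟫` (encoded by `enc2`, with `⟪x⟫ = ⟨x⟩`) of the
states of `ℬ(ℛ)`, and an automaton `𝒞_{REDEX_𝒮}(𝒮)` (transitions `Etrans`, final
states `Qf'`) recognizing the non-`𝒮`-root-stable ground terms of `𝒯(𝓕)`. -/
structure CrsSetup {F : Type} [Fintype F] {ar : F → ℕ} (Q : Type) [Fintype Q]
    (R S : TRS F ar) extends CSetup Q R.liftC (TRS.RSset S.circ) where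
  enc2 : Term (F ⊕ F) (arC ar) → Q
  henc2 : Set.InjOn enc2 (BStateSet R.liftC)
  hx : enc2 (Term.var 0) = enc (Term.var 0)
  hfresh2 : (enc2 '' (BStateSet R.liftC \ {Term.var 0})) ∩
              (QA ∪ enc '' BStateSet R.liftC) = ∅
  Etrans : Set (TARule (F ⊕ F) (arC ar) Q)
  Qf' : Set Q
  hQf' : Qf' ⊆ statesOf Etrans
  hEfresh : statesOf Etrans ∩
      (QA ∪ enc '' BStateSet R.liftC ∪ enc2 '' (BStateSet R.liftC \ {Term.var 0})) = ∅
  hE : ∀ t : Term (F ⊕ F) (arC ar),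
      (t.Ground ∧ ∃ q ∈ Qf', Reaches Etrans t q) ↔
      (∃ s : Term F ar, t = liftC s ∧ s.Ground ∧ ¬ S.RootStable s)

namespace CrsSetup

variable {F : Type} [Fintype F] {ar : F → ℕ} {Q : Type} [Fintype Q] {R S : TRS F ar}

/-- The transition rules `Γ'` of the automaton `𝒞'_{RS_{𝒮°}}(ℛ)`. -/
def Γ' (C : CrsSetup Q R S) : Set (TARule (F ⊕ F) (arC ar) Q) :=
  C.toCSetup.Γsat ∪ BMatch R.liftC C.enc2 ∪ C.Etrans

end CrsSetup

/-- The transition rules of the automaton `𝒟'(ℛ,𝒮)` over `𝓕`, built from the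
transition rules `Γ'` of `𝒞'_{RS_{𝒮°}}(ℛ)`. -/
def DTransRS {F : Type} {ar : F → ℕ} {Q : Type} (Rg : TRS (F ⊕ F) (arC ar))
    (Γ' : Set (TARule (F ⊕ F) (arC ar) Q)) (enc2 : Term (F ⊕ F) (arC ar) → Q) :
    Set (TARule F ar (Set Q × Set Q)) :=
  { ρ | ∃ (f : F) (SP : Fin (ar f) → Set Q × Set Q) (P1 P2 : Set Q),
      P1 ⊆ (⋃ i : Fin (ar f), oneStep Γ' (Sum.inl f)
              (fun (j : Fin (ar f)) => if j = i then (SP j).2 else (SP j).1)) ∧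
      (∀ (i : Fin (ar f)), ∀ q ∈ (SP i).2,
        (P1 ∩ oneStep Γ' (Sum.inl f) (fun (j : Fin (ar f)) => if j = i then {q} else (SP j).1)).Nonempty) ∧
      ((LhsMatch Rg enc2 (Sum.inl f) (fun i => (SP i).1) ∧ P2.Nonempty ∧
          P2 ⊆ oneStep Γ' (Sum.inr f) (fun i => (SP i).1)) ∨
       (¬ LhsMatch Rg enc2 (Sum.inl f) (fun i => (SP i).1) ∧ P2 = (∅ : Set Q))) ∧
      ρ = ⟨f, SP, (oneStep Γ' (Sum.inl f) (fun i => (SP i).1), P1 ∪ P2)⟩ }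

/-- The automaton `𝒟'(ℛ,𝒮)`: final states are the pairs `[S,P]` with
`S ∩ Q_f' ≠ ∅` and `P ⊆ Q_f`. -/
def DAutomatonRS {F : Type} {ar : F → ℕ} {Q : Type} (Rg : TRS (F ⊕ F) (arC ar))
    (Γ' : Set (TARule (F ⊕ F) (arC ar) Q)) (enc2 : Term (F ⊕ F) (arC ar) → Q)
    (Qf' Qf : Set Q) : TreeAutomaton F ar (Set Q × Set Q) where
  trans := DTransRS Rg Γ' enc2
  final := { SP | (SP.1 ∩ Qf').Nonempty ∧ SP.2 ⊆ Qf }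


/-! ### Auxiliary lemmas: terms -/

namespace Term

variable {F : Type} {ar : F → ℕ}

lemma ground_app_iff {f : F} {ts : Fin (ar f) → Term F ar} :
    (app f ts).Ground ↔ ∀ i, (ts i).Ground := by
  simp [Ground, vars, Finset.eq_empty_iff_forall_notMem, Finset.mem_biUnion]
  tauto

lemma not_ground_var (n : ℕ) : ¬ (var n : Term F ar).Ground := by
  simp [Ground, vars]

lemma subst_ground {t : Term F ar} (h : t.Ground) (σ : ℕ → Term F ar) :
    t.subst σ = t := by
  induction t with
  | var n => exact absurd h (not_ground_var n)
  | app f ts ih =>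
      rw [ground_app_iff] at h
      simp only [subst]
      exact congrArg _ (funext fun i => ih i (h i))

lemma subst_subst (t : Term F ar) (σ τ : ℕ → Term F ar) :
    (t.subst σ).subst τ = t.subst (fun n => (σ n).subst τ) := by
  induction t with
  | var n => rfl
  | app f ts ih => simp only [subst]; exact congrArg _ (funext fun i => ih i)

lemma subst_congr {t : Term F ar} {σ τ : ℕ → Term F ar}
    (h : ∀ n ∈ t.vars, σ n = τ n) : t.subst σ = t.subst τ := by
  induction t with
  | var n => exact h n (by simp [vars])
  | app f ts ih =>
      simp only [subst]
      refine congrArg _ (funext fun i => ih i fun n hn => h n ?_)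
      simp only [vars, Finset.mem_biUnion]
      exact ⟨i, Finset.mem_univ i, hn⟩

lemma ground_subst {t : Term F ar} {σ : ℕ → Term F ar}
    (h : ∀ n, (σ n).Ground) : (t.subst σ).Ground := by
  induction t with
  | var n => exact h n
  | app f ts ih => simp only [subst]; exact ground_app_iff.2 fun i => ih i

lemma ground_of_subst_ground {t : Term F ar} {σ : ℕ → Term F ar}
    (h : (t.subst σ).Ground) : ∀ n ∈ t.vars, (σ n).Ground := by
  induction t with
  | var n => intro m hm; simp [vars] at hm; subst hm; exact h
  | app f ts ih =>
      intro n hn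
      simp only [vars, Finset.mem_biUnion] at hn
      obtain ⟨i, -, hn⟩ := hn
      simp only [subst, ground_app_iff] at h
      exact ih i (h i) n hn

/-! #### subtermAt / replaceAt -/

lemma subtermAt_append (t : Term F ar) (p p' : List ℕ) :
    t.subtermAt (p ++ p') = (t.subtermAt p).bind (fun w => w.subtermAt p') := by
  induction p generalizing t with
  | nil => simp [subtermAt]
  | cons i p ih =>
      cases t with
      | var n => simp [subtermAt]
      | app f ts =>
          simp only [List.cons_append, subtermAt]
          by_cases h : i < ar f
          · rw [dif_pos h, dif_pos h]; exact ih _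
          · rw [dif_neg h, dif_neg h]; rfl

lemma ground_subtermAt {t w : Term F ar} {p : List ℕ} (hg : t.Ground)
    (h : t.subtermAt p = some w) : w.Ground := by
  induction p generalizing t with
  | nil => simp only [subtermAt] at h; cases h; exact hg
  | cons i p ih =>
      cases t with
      | var n => exact absurd hg (not_ground_var n)
      | app f ts =>
          simp only [subtermAt] at h
          by_cases hi : i < ar f
          · rw [dif_pos hi] at h
            exact ih (ground_app_iff.1 hg _) h
          · rw [dif_neg hi] at h; cases h

lemma subtermAt_of_replaceAt {t t' u : Term F ar} {p : List ℕ}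
    (h : t.replaceAt p u = some t') : t'.subtermAt p = some u := by
  induction p generalizing t t' with
  | nil => simp only [replaceAt] at h; cases h; simp only [subtermAt]
  | cons i p ih =>
      cases t with
      | var n => simp only [replaceAt] at h; cases h
      | app f ts =>
          simp only [replaceAt] at h
          by_cases hi : i < ar f
          · rw [dif_pos hi] at h
            obtain ⟨s, hs, rfl⟩ := Option.map_eq_some_iff.1 h
            simp only [subtermAt, dif_pos hi, Function.update_self]
            exact ih hs
          · rw [dif_neg hi] at h; cases h

lemma replaceAt_isSome {t w : Term F ar} {p : List ℕ}
    (h : t.subtermAt p = some w) (u : Term F ar) :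
    ∃ t', t.replaceAt p u = some t' := by
  induction p generalizing t with
  | nil => exact ⟨u, by simp only [replaceAt]⟩
  | cons i p ih =>
      cases t with
      | var n => simp [subtermAt] at h
      | app f ts =>
          simp only [subtermAt] at h
          by_cases hi : i < ar f
          · rw [dif_pos hi] at h
            obtain ⟨s, hs⟩ := ih h
            exact ⟨app f (Function.update ts ⟨i, hi⟩ s),
              by simp only [replaceAt, dif_pos hi, hs, Option.map_some]⟩
          · rw [dif_neg hi] at h; cases h

lemma replaceAt_replaceAt {t t' w u : Term F ar} {p : List ℕ}
    (hsub : t.subtermAt p = some w) (hrep : t.replaceAt p u = some t') :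
    t'.replaceAt p w = some t := by
  induction p generalizing t t' with
  | nil =>
      simp only [replaceAt] at hrep ⊢
      simp only [subtermAt] at hsub
      cases hrep; cases hsub; rfl
  | cons i p ih =>
      cases t with
      | var n => simp only [replaceAt] at hrep; cases hrep
      | app f ts =>
          simp only [replaceAt] at hrep
          simp only [subtermAt] at hsub
          by_cases hi : i < ar f
          · rw [dif_pos hi] at hrep hsub
            obtain ⟨s, hs, rfl⟩ := Option.map_eq_some_iff.1 hrep
            simp only [replaceAt, dif_pos hi, Function.update_self, ih hsub hs,
              Option.map_some, Function.update_idem, Function.update_eq_self]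
          · rw [dif_neg hi] at hrep; cases hrep

lemma ground_replaceAt {t t' u : Term F ar} {p : List ℕ} (hg : t.Ground)
    (hu : u.Ground) (h : t.replaceAt p u = some t') : t'.Ground := by
  induction p generalizing t t' with
  | nil => simp only [replaceAt] at h; cases h; exact hu
  | cons i p ih =>
      cases t with
      | var n => simp only [replaceAt] at h; cases h
      | app f ts =>
          simp only [replaceAt] at h
          by_cases hi : i < ar f
          · rw [dif_pos hi] at h
            obtain ⟨s, hs, rfl⟩ := Option.map_eq_some_iff.1 h
            rw [ground_app_iff] at hg ⊢
            intro j
            rcases eq_or_ne j ⟨i, hi⟩ with rfl | hj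
            · rw [Function.update_self]; exact ih (hg _) hs
            · rw [Function.update_of_ne hj]; exact hg j
          · rw [dif_neg hi] at h; cases h

lemma subtermAt_subst {t w : Term F ar} {p : List ℕ} (σ : ℕ → Term F ar)
    (h : t.subtermAt p = some w) : (t.subst σ).subtermAt p = some (w.subst σ) := by
  induction p generalizing t with
  | nil => simp only [subtermAt] at h ⊢; cases h; rfl
  | cons i p ih =>
      cases t with
      | var n => simp [subtermAt] at h
      | app f ts =>
          simp only [subtermAt] at h
          by_cases hi : i < ar f
          · rw [dif_pos hi] at h
            simp only [subst, subtermAt, dif_pos hi]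
            exact ih h
          · rw [dif_neg hi] at h; cases h

lemma replaceAt_subst {t t' u : Term F ar} {p : List ℕ} (σ : ℕ → Term F ar)
    (h : t.replaceAt p u = some t') :
    (t.subst σ).replaceAt p (u.subst σ) = some (t'.subst σ) := by
  induction p generalizing t t' with
  | nil => simp only [replaceAt] at h ⊢; cases h; rfl
  | cons i p ih =>
      cases t with
      | var n => simp only [replaceAt] at h; cases h
      | app f ts =>
          simp only [replaceAt] at h
          by_cases hi : i < ar f
          · rw [dif_pos hi] at h
            obtain ⟨s, hs, rfl⟩ := Option.map_eq_some_iff.1 h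
            simp only [subst, replaceAt, dif_pos hi, ih hs, Option.map_some]
            refine congrArg some (congrArg _ (funext fun j => ?_))
            exact (Function.apply_update (fun _ w => Term.subst σ w) ts ⟨i, hi⟩ s j).symm
          · rw [dif_neg hi] at h; cases h

lemma mem_vars_iff_count_pos {t : Term F ar} {n : ℕ} :
    n ∈ t.vars ↔ 0 < t.count n := by
  induction t with
  | var m =>
      simp only [vars, Finset.mem_singleton, count]
      rcases eq_or_ne m n with rfl | h
      · simp
      · simp [h, Ne.symm h]
  | app f ts ih =>
      simp only [vars, count, Finset.mem_biUnion, Finset.mem_univ, true_and]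
      constructor
      · rintro ⟨i, hi⟩
        refine lt_of_lt_of_le ((ih i).1 hi) ?_
        exact Finset.single_le_sum (f := fun j => (ts j).count n)
          (fun j _ => Nat.zero_le _) (Finset.mem_univ _)
      · intro hpos
        by_contra hno
        push_neg at hno
        have : ∑ i, (ts i).count n = 0 := by
          refine Finset.sum_eq_zero fun i _ => ?_
          have := (ih i).not.1 (hno i)
          omega
        omega

lemma linear_app {f : F} {ts : Fin (ar f) → Term F ar}
    (h : (app f ts).Linear) (i : Fin (ar f)) : (ts i).Linear := by
  intro n
  refine le_trans ?_ (h n)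
  simp only [count]
  exact Finset.single_le_sum (f := fun j => (ts j).count n)
    (fun j _ => Nat.zero_le _) (Finset.mem_univ i)

lemma linear_app_disjoint {f : F} {ts : Fin (ar f) → Term F ar}
    (h : (app f ts).Linear) {i j : Fin (ar f)} {n : ℕ}
    (hi : n ∈ (ts i).vars) (hj : n ∈ (ts j).vars) : i = j := by
  by_contra hij
  have := h n
  simp only [count] at this
  have hsum : (ts i).count n + (ts j).count n ≤ ∑ k, (ts k).count n := by
    have := Finset.sum_le_sum_of_subset (Finset.subset_univ {i, j})
      (f := fun k => (ts k).count n)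
    rwa [Finset.sum_pair hij] at this
  rw [mem_vars_iff_count_pos] at hi hj
  omega

lemma count_subtermAt_le {t w : Term F ar} {p : List ℕ}
    (h : t.subtermAt p = some w) (n : ℕ) : w.count n ≤ t.count n := by
  induction p generalizing t with
  | nil => simp only [subtermAt] at h; cases h; exact le_refl _
  | cons i p ih =>
      cases t with
      | var m => simp [subtermAt] at h
      | app f ts =>
          simp only [subtermAt] at h
          by_cases hi : i < ar f
          · rw [dif_pos hi] at h
            refine le_trans (ih h) ?_
            simp only [count]
            exact Finset.single_le_sum (f := fun j => (ts j).count n)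
              (fun j _ => Nat.zero_le _) (Finset.mem_univ _)
          · rw [dif_neg hi] at h; cases h

lemma linear_subtermAt {t w : Term F ar} {p : List ℕ} (hl : t.Linear)
    (h : t.subtermAt p = some w) : w.Linear :=
  fun n => le_trans (count_subtermAt_le h n) (hl n)

end Term
/-! ### Auxiliary lemmas: liftB and bullet -/

section LiftB

variable {F : Type} {ar : F → ℕ}

@[simp] lemma liftB_var (n : ℕ) : (liftB (Term.var n) : Term (Option F) (arB ar)) = Term.var n := rfl

@[simp] lemma liftB_app (f : F) (ts : Fin (ar f) → Term F ar) :
    (liftB (Term.app f ts) : Term (Option F) (arB ar)) =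
      Term.app (some f) (fun i => liftB (ts i)) := rfl

lemma vars_liftB (t : Term F ar) : (liftB t : Term (Option F) (arB ar)).vars = t.vars := by
  induction t with
  | var n => rfl
  | app f ts ih => simp only [liftB_app, Term.vars]; exact congrArg _ (funext ih)

lemma ground_liftB {t : Term F ar} (h : t.Ground) :
    (liftB t : Term (Option F) (arB ar)).Ground := by
  unfold Term.Ground; rw [vars_liftB]; exact h

lemma count_liftB (t : Term F ar) (n : ℕ) :
    (liftB t : Term (Option F) (arB ar)).count n = t.count n := by
  induction t with
  | var m => rfl
  | app f ts ih => simp only [liftB_app, Term.count]; exact Finset.sum_congr rfl fun i _ => ih i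

lemma linear_liftB {t : Term F ar} (h : t.Linear) :
    (liftB t : Term (Option F) (arB ar)).Linear := by
  intro n; rw [count_liftB]; exact h n

lemma liftB_subst (t : Term F ar) (σ : ℕ → Term F ar) :
    (liftB (t.subst σ) : Term (Option F) (arB ar)) = (liftB t).subst (fun n => liftB (σ n)) := by
  induction t with
  | var n => rfl
  | app f ts ih =>
      simp only [Term.subst, liftB_app]
      exact congrArg _ (funext fun i => ih i)

lemma subtermAt_liftB {t w : Term F ar} {p : List ℕ} (h : t.subtermAt p = some w) :
    (liftB t : Term (Option F) (arB ar)).subtermAt p = some (liftB w) := by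
  induction p generalizing t with
  | nil => simp only [Term.subtermAt] at h ⊢; cases h; rfl
  | cons i p ih =>
      cases t with
      | var n => simp [Term.subtermAt] at h
      | app f ts =>
          simp only [Term.subtermAt] at h
          by_cases hi : i < ar f
          · rw [dif_pos hi] at h
            simp only [liftB_app, Term.subtermAt]
            rw [dif_pos (show i < arB ar (some f) from hi)]
            exact ih h
          · rw [dif_neg hi] at h; cases h

lemma subtermAt_liftB_inv {t : Term F ar} {v : Term (Option F) (arB ar)} {p : List ℕ}
    (h : (liftB t : Term (Option F) (arB ar)).subtermAt p = some v) :
    ∃ v₀, t.subtermAt p = some v₀ ∧ v = liftB v₀ := by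
  induction p generalizing t with
  | nil => simp only [Term.subtermAt] at h ⊢; cases h; exact ⟨t, rfl, rfl⟩
  | cons i p ih =>
      cases t with
      | var n => simp [Term.subtermAt] at h
      | app f ts =>
          simp only [liftB_app, Term.subtermAt] at h
          by_cases hi : i < ar f
          · rw [dif_pos (show i < arB ar (some f) from hi)] at h
            obtain ⟨v₀, hv₀, rfl⟩ := ih h
            exact ⟨v₀, by simp only [Term.subtermAt]; rw [dif_pos hi]; exact hv₀, rfl⟩
          · rw [dif_neg (show ¬ i < arB ar (some f) from hi)] at h; cases h

lemma mem_liftB_rules {R : TRS F ar} {lr : Term (Option F) (arB ar) × Term (Option F) (arB ar)} :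
    lr ∈ R.liftB.rules ↔ ∃ l r, (l, r) ∈ R.rules ∧ lr = (liftB l, liftB r) := by
  constructor
  · rintro ⟨⟨l, r⟩, h, rfl⟩
    exact ⟨l, r, h, rfl⟩
  · rintro ⟨l, r, h, rfl⟩
    exact ⟨(l, r), h, rfl⟩

@[simp] lemma ground_bulletTm : (bulletTm : Term (Option F) (arB ar)).Ground := by
  simp only [bulletTm, Term.Ground, Term.vars]
  rw [Finset.eq_empty_iff_forall_notMem]
  intro x hx
  rw [Finset.mem_biUnion] at hx
  obtain ⟨i, -, -⟩ := hx
  exact i.elim0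

lemma app_none_eq_bulletTm (ts : Fin (arB ar none) → Term (Option F) (arB ar)) :
    Term.app none ts = bulletTm := by
  unfold bulletTm
  congr 1
  exact funext fun i => i.elim0

lemma subst_bulletTm (σ : ℕ → Term (Option F) (arB ar)) :
    (bulletTm : Term (Option F) (arB ar)).subst σ = bulletTm := by
  simp only [bulletTm, Term.subst]
  exact app_none_eq_bulletTm _

/-- `•` is a redex of `ℛ•`. -/
lemma bullet_isRedex (R : TRS F ar) : R.bullet.IsRedex bulletTm :=
  ⟨(bulletTm, bulletTm), Or.inr rfl, id Term.var, (subst_bulletTm _).symm⟩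

end LiftB
/-! ### Auxiliary lemmas: Reaches -/

section ReachesLemmas

variable {G : Type} {arG : G → ℕ} {Q : Type}

lemma Reaches.mono {Γ Γ' : Set (TARule G arG Q)} (h : Γ ⊆ Γ') {t : Term G arG} {q : Q}
    (hr : Reaches Γ t q) : Reaches Γ' t q := by
  induction hr with
  | app hts hrule ih => exact Reaches.app ih (h hrule)

lemma Reaches.ground {Γ : Set (TARule G arG Q)} {t : Term G arG} {q : Q}
    (hr : Reaches Γ t q) : t.Ground := by
  induction hr with
  | app hts hrule ih => exact Term.ground_app_iff.2 ih

lemma dn_app (Γ : Set (TARule G arG Q)) (g : G) (us : Fin (arG g) → Term G arG) :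
    dn Γ (Term.app g us) = oneStep Γ g (fun i => dn Γ (us i)) := by
  ext q
  constructor
  · intro h
    cases h with
    | app hts hrule => exact ⟨_, hts, hrule⟩
  · rintro ⟨qs, hqs, hrule⟩
    exact Reaches.app hqs hrule

lemma ReachesT.mono {Γ Γ' : Set (TARule G arG Q)} (h : Γ ⊆ Γ') {θ : ℕ → Q}
    {t : Term G arG} {q : Q} (hr : ReachesT Γ θ t q) : ReachesT Γ' θ t q := by
  induction hr with
  | var n => exact ReachesT.var n
  | app hts hrule ih => exact ReachesT.app ih (h hrule)

lemma ReachesT.congr {Γ : Set (TARule G arG Q)} {θ θ' : ℕ → Q} {t : Term G arG} {q : Q}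
    (hr : ReachesT Γ θ t q) (h : ∀ n ∈ t.vars, θ' n = θ n) : ReachesT Γ θ' t q := by
  induction hr with
  | var n =>
      rw [← h n (by simp [Term.vars])]
      exact ReachesT.var n
  | app hts hrule ih =>
      refine ReachesT.app (fun i => ih i fun n hn => h n ?_) hrule
      simp only [Term.vars, Finset.mem_biUnion]
      exact ⟨i, Finset.mem_univ i, hn⟩

lemma reachesT_subst {Γ : Set (TARule G arG Q)} {θ : ℕ → Q} {t : Term G arG} {q : Q}
    (hr : ReachesT Γ θ t q) (σ : ℕ → Term G arG)
    (hσ : ∀ n ∈ t.vars, Reaches Γ (σ n) (θ n)) : Reaches Γ (t.subst σ) q := by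
  induction hr with
  | var n => exact hσ n (by simp [Term.vars])
  | app hts hrule ih =>
      refine Reaches.app (fun i => ih i fun n hn => hσ n ?_) hrule
      simp only [Term.vars, Finset.mem_biUnion]
      exact ⟨i, Finset.mem_univ i, hn⟩

/-- Decomposition of a run at a valid position. -/
lemma reaches_decomp {Γ : Set (TARule G arG Q)} :
    ∀ (p : List ℕ) (v : Term G arG) (q : Q) (w : Term G arG),
    Reaches Γ v q → v.subtermAt p = some w →
    ∃ q', Reaches Γ w q' ∧
      ∀ w', Reaches Γ w' q' → ∀ v', v.replaceAt p w' = some v' → Reaches Γ v' q := by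
  intro p
  induction p with
  | nil =>
      intro v q w hv hw
      simp only [Term.subtermAt] at hw; cases hw
      refine ⟨q, hv, ?_⟩
      intro w' hw' v' hv'
      simp only [Term.replaceAt] at hv'; cases hv'; exact hw'
  | cons i p ih =>
      intro v q w hv hw
      cases hv with
      | @app f ts qs _ hts hrule =>
          simp only [Term.subtermAt] at hw
          by_cases hi : i < arG f
          · rw [dif_pos hi] at hw
            obtain ⟨q', hq', hcont⟩ := ih (ts ⟨i, hi⟩) (qs ⟨i, hi⟩) w (hts _) hw
            refine ⟨q', hq', ?_⟩
            intro w' hw' v' hv'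
            simp only [Term.replaceAt, dif_pos hi] at hv'
            obtain ⟨s, hs, rfl⟩ := Option.map_eq_some_iff.1 hv'
            refine Reaches.app (qs := qs) (fun j => ?_) hrule
            rcases eq_or_ne j ⟨i, hi⟩ with rfl | hj
            · rw [Function.update_self]; exact hcont w' hw' s hs
            · rw [Function.update_of_ne hj]; exact hts j
          · rw [dif_neg hi] at hw; cases hw

/-- Decomposition of a run on a substituted linear term. -/
lemma reaches_subst_decomp {Γ : Set (TARule G arG Q)} :
    ∀ (t : Term G arG) (σ : ℕ → Term G arG) (q : Q),
    Reaches Γ (t.subst σ) q → t.Linear →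
    ∃ θ : ℕ → Q, (∀ n ∈ t.vars, Reaches Γ (σ n) (θ n)) ∧ ReachesT Γ θ t q := by
  intro t
  induction t with
  | var n =>
      intro σ q h _
      refine ⟨fun _ => q, fun m hm => ?_, ReachesT.var n⟩
      simp only [Term.vars, Finset.mem_singleton] at hm
      subst hm
      exact h
  | app f us ihu =>
      intro σ q h hlin
      rw [show (Term.app f us).subst σ = Term.app f (fun i => (us i).subst σ) from rfl] at h
      cases h with
      | @app _ _ qs _ hts hrule =>
          have ihs : ∀ i, ∃ θ, (∀ n ∈ (us i).vars, Reaches Γ (σ n) (θ n)) ∧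
              ReachesT Γ θ (us i) (qs i) :=
            fun i => ihu i σ (qs i) (hts i) (Term.linear_app hlin i)
          choose θs hθ1 hθ2 using ihs
          classical
          refine ⟨fun n => if h : ∃ i, n ∈ (us i).vars then θs h.choose n else q, ?_, ?_⟩
          · intro n hn
            simp only [Term.vars, Finset.mem_biUnion, Finset.mem_univ, true_and] at hn
            obtain ⟨i, hi⟩ := hn
            have hex : ∃ j, n ∈ (us j).vars := ⟨i, hi⟩
            simp only [dif_pos hex]
            exact hθ1 _ n hex.choose_spec
          · refine ReachesT.app (fun i => ?_) hrule
            refine (hθ2 i).congr fun n hn => ?_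
            have hex : ∃ j, n ∈ (us j).vars := ⟨i, hn⟩
            simp only [dif_pos hex]
            have : hex.choose = i := Term.linear_app_disjoint hlin hex.choose_spec hn
            rw [this]

lemma reachesT_iUnion_chain {Γs : ℕ → Set (TARule G arG Q)}
    (hmono : ∀ m n, m ≤ n → Γs m ⊆ Γs n) {θ : ℕ → Q} {t : Term G arG} {q : Q}
    (h : ReachesT (⋃ n, Γs n) θ t q) : ∃ n, ReachesT (Γs n) θ t q := by
  induction h with
  | var n => exact ⟨0, ReachesT.var n⟩
  | @app f ts qs q hts hrule ih =>
      choose Ns hNs using ih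
      obtain ⟨S, ⟨n₀, rfl⟩, hρ⟩ := hrule
      refine ⟨Finset.univ.sup Ns ⊔ n₀, ?_⟩
      refine ReachesT.app (fun i => (hNs i).mono (hmono _ _ ?_)) (hmono _ _ le_sup_right hρ)
      exact le_sup_of_le_left (Finset.le_sup (Finset.mem_univ i))

lemma reaches_target {Γ : Set (TARule G arG Q)} {t : Term G arG} {q : Q}
    (h : Reaches Γ t q) : ∃ ρ ∈ Γ, ρ.2.2 = q := by
  cases h with
  | app _ hrule => exact ⟨_, hrule, rfl⟩

lemma reachesT_target {Γ : Set (TARule G arG Q)} {θ : ℕ → Q} {t : Term G arG} {q : Q}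
    (h : ReachesT Γ θ t q) {S : Set Q} (hθ : ∀ n ∈ t.vars, θ n ∈ S)
    (hΓ : ∀ ρ ∈ Γ, ρ.2.2 ∈ S) : q ∈ S := by
  cases h with
  | var n => exact hθ n (by simp [Term.vars])
  | app hts hrule => exact hΓ _ hrule

end ReachesLemmas
/-! ### Auxiliary lemmas: SR, ℬ(ℛ), bullets in terms -/

section SRLemmas

variable {G : Type} {arG : G → ℕ} {Q : Type}

lemma SR_subterm {Rg : TRS G arG} {t w : Term G arG} {p : List ℕ}
    (ht : t ∈ SR Rg) (hw : t.subtermAt p = some w) : w ∈ SR Rg := by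
  obtain ⟨lr, hlr, f, ts, hl, i, p', hp'⟩ := ht
  refine ⟨lr, hlr, f, ts, hl, i, p' ++ p, ?_⟩
  rw [Term.subtermAt_append, hp']
  exact hw

lemma SR_arg {Rg : TRS G arG} {g : G} {us : Fin (arG g) → Term G arG}
    (h : Term.app g us ∈ SR Rg) (i : Fin (arG g)) : us i ∈ SR Rg := by
  refine SR_subterm h (p := [i.val]) ?_
  simp [Term.subtermAt, i.isLt, Fin.eta]

lemma SR_arg_of_lhs {Rg : TRS G arG} {g : G} {ls : Fin (arG g) → Term G arG}
    {r : Term G arG} (h : (Term.app g ls, r) ∈ Rg.rules) (i : Fin (arG g)) :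
    ls i ∈ SR Rg :=
  ⟨(Term.app g ls, r), h, g, ls, rfl, i, [], by simp only [Term.subtermAt]⟩

/-- Every ground term reaches the state `⟨x⟩`. -/
lemma ground_reaches_x0 {Γ : Set (TARule G arG Q)} {enc : Term G arG → Q}
    (hBP : BProp enc ⊆ Γ) : ∀ {t : Term G arG}, t.Ground →
    Reaches Γ t (enc (Term.var 0)) := by
  intro t
  induction t with
  | var n => intro h; exact absurd h (Term.not_ground_var n)
  | app f ts ih =>
      intro h
      exact Reaches.app (fun i => ih i (Term.ground_app_iff.1 h i))
        (hBP ⟨f, rfl⟩)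

/-- Every ground instance of a term of `S_ℛ` reaches the corresponding state. -/
lemma ginst_reaches {Γ : Set (TARule G arG Q)} {Rg : TRS G arG}
    {enc encX : Term G arG → Q} (hBP : BProp enc ⊆ Γ) (hBM : BMatch Rg encX ⊆ Γ)
    (hX : encX (Term.var 0) = enc (Term.var 0)) :
    ∀ (t : Term G arG), t ∈ SR Rg → ∀ σ, (t.subst σ).Ground →
    Reaches Γ (t.subst σ) (encX (stPattern t)) := by
  intro t
  induction t with
  | var n =>
      intro _ σ hg
      rw [show stPattern (Term.var n) = Term.var 0 from rfl, hX]
      exact ground_reaches_x0 hBP hg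
  | app g us ih =>
      intro hSR σ hg
      have hrule : (⟨g, fun i => encX (stPattern (us i)), encX (Term.app g us)⟩ :
          TARule G arG Q) ∈ Γ := hBM ⟨g, us, hSR, rfl⟩
      rw [show (Term.app g us).subst σ = Term.app g (fun i => (us i).subst σ) from rfl] at hg ⊢
      exact Reaches.app
        (fun i => ih i (SR_arg hSR i) σ (Term.ground_app_iff.1 hg i)) hrule

end SRLemmas

section RedexPosLemmas

variable {F : Type} {ar : F → ℕ}

lemma redexPos_cons {S : TRS F ar} {f : F} {ts : Fin (ar f) → Term F ar}
    {j : ℕ} {p : List ℕ} :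
    S.RedexPos (Term.app f ts) (j :: p) ↔ ∃ h : j < ar f, S.RedexPos (ts ⟨j, h⟩) p := by
  constructor
  · rintro ⟨u, hu, hr⟩
    simp only [Term.subtermAt] at hu
    by_cases hj : j < ar f
    · rw [dif_pos hj] at hu
      exact ⟨hj, u, hu, hr⟩
    · rw [dif_neg hj] at hu; cases hu
  · rintro ⟨h, u, hu, hr⟩
    refine ⟨u, ?_, hr⟩
    simp only [Term.subtermAt]
    rw [dif_pos h]
    exact hu

lemma redexPos_nil {S : TRS F ar} {s : Term F ar} :
    S.RedexPos s [] ↔ S.IsRedex s := by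
  constructor
  · rintro ⟨u, hu, hr⟩
    simp only [Term.subtermAt] at hu; cases hu; exact hr
  · intro h
    exact ⟨s, by simp only [Term.subtermAt], h⟩

/-- Bullet-freeness of a term over `𝓕 ∪ {•}`. -/
def NoBullet : Term (Option F) (arB ar) → Prop
  | Term.var _ => True
  | Term.app g us => g ≠ none ∧ ∀ i, NoBullet (us i)

lemma noBullet_liftB (t : Term F ar) : NoBullet (liftB t : Term (Option F) (arB ar)) := by
  induction t with
  | var n => trivial
  | app f ts ih => exact ⟨Option.some_ne_none f, fun i => ih i⟩

lemma reaches_of_noBullet {Q : Type} {Γ : Set (TARule (Option F) (arB ar) Q)}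
    {C : TARule (Option F) (arB ar) Q → Prop} {t : Term (Option F) (arB ar)} {q : Q}
    (hnb : NoBullet t) (h : Reaches Γ t q) :
    Reaches {ρ ∈ Γ | ρ.1 = none → C ρ} t q := by
  induction h with
  | @app f ts qs q hts hrule ih =>
      exact Reaches.app (fun i => ih i (hnb.2 i))
        ⟨hrule, fun hf => absurd hf hnb.1⟩

/-- Ground normal forms of `ℛ•` contain no `•`. -/
lemma noBullet_of_NF {R : TRS F ar} {t : Term (Option F) (arB ar)}
    (h : t ∈ TRS.NFset R.bullet) : NoBullet t := by
  obtain ⟨hg, hnr⟩ := h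
  induction t with
  | var n => trivial
  | app g us ih =>
      constructor
      · rintro rfl
        refine hnr ⟨[], redexPos_nil.2 ?_⟩
        rw [app_none_eq_bulletTm]
        exact bullet_isRedex R
      · intro i
        refine ih i (Term.ground_app_iff.1 hg i) (fun hred => hnr ?_)
        obtain ⟨p, hp⟩ := hred
        refine ⟨i.val :: p, redexPos_cons.2 ⟨i.isLt, ?_⟩⟩
        rw [Fin.eta]
        exact hp

/-- Subterms of lifted terms are lifted. -/
lemma SR_liftB_mem {R : TRS F ar} {t : Term (Option F) (arB ar)}
    (h : t ∈ SR R.liftB) : ∃ t₀ : Term F ar, t = liftB t₀ := by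
  obtain ⟨lr, hlr, f, ts, hl, i, p, hp⟩ := h
  obtain ⟨l, r, hmem, hlr'⟩ := mem_liftB_rules.1 hlr
  cases l with
  | var n => exact absurd rfl (R.lhs_not_var (Term.var n, r) hmem n)
  | app f₀ ls =>
      have hl1 : lr.1 = liftB (Term.app f₀ ls) := by rw [hlr']
      rw [hl, liftB_app] at hl1
      cases hl1
      obtain ⟨t₀, -, rfl⟩ := subtermAt_liftB_inv hp
      exact ⟨t₀, rfl⟩

end RedexPosLemmas
/-! ### The clean saturated automaton and backward simulation -/

section Saturation

variable {F : Type} [Fintype F] {ar : F → ℕ} {Q : Type} [Fintype Q]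
  {R : TRS F ar} (C : CpSetup Q R.liftB (TRS.NFset R.bullet))

/-- The saturated transitions, restricted so that `•` can only reach `⟨x⟩`. -/
def GammaC : Set (TARule (Option F) (arB ar) Q) :=
  {ρ ∈ CSetup.Γsat C.toCSetup | ρ.1 = none → ρ.2.2 = C.enc (Term.var 0)}

/-- The iterates of the saturation step. -/
def iterΓ (n : ℕ) : Set (TARule (Option F) (arB ar) Q) :=
  (satStep R.liftB C.enc (CSetup.Qstates C.toCSetup))^[n] (CSetup.Γ0 C.toCSetup)

lemma Γsat_eq_iUnion : CSetup.Γsat C.toCSetup = ⋃ n, iterΓ C n := rfl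

lemma iterΓ_succ (n : ℕ) :
    iterΓ C (n + 1) = satStep R.liftB C.enc (CSetup.Qstates C.toCSetup) (iterΓ C n) :=
  Function.iterate_succ_apply' _ _ _

lemma iterΓ_mono : ∀ m n, m ≤ n → iterΓ C m ⊆ iterΓ C n := by
  intro m n hmn
  induction hmn with
  | refl => exact subset_rfl
  | step _ ih =>
      refine subset_trans ih ?_
      rw [iterΓ_succ]
      exact Set.subset_union_left

lemma iterΓ_subset_Γsat (n : ℕ) : iterΓ C n ⊆ CSetup.Γsat C.toCSetup := by
  rw [Γsat_eq_iUnion]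
  exact Set.subset_iUnion (fun n => iterΓ C n) n

lemma Γ0_subset_Γsat : CSetup.Γ0 C.toCSetup ⊆ CSetup.Γsat C.toCSetup :=
  iterΓ_subset_Γsat C 0

lemma Γsat_subset_Γ' : CSetup.Γsat C.toCSetup ⊆ C.Γ' :=
  fun _ h => Or.inl (Or.inl (Or.inl h))

lemma GammaC_subset_Γsat : GammaC C ⊆ CSetup.Γsat C.toCSetup := fun _ h => h.1

lemma GammaC_subset_Γ' : GammaC C ⊆ C.Γ' :=
  subset_trans (GammaC_subset_Γsat C) (Γsat_subset_Γ' C)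

lemma BProp_subset_GammaC : BProp C.enc ⊆ GammaC C := by
  rintro ρ ⟨f, rfl⟩
  exact ⟨Γ0_subset_Γsat C (Or.inr (Or.inr ⟨f, rfl⟩)), fun _ => rfl⟩

lemma BMatch_subset_GammaC : BMatch R.liftB C.enc ⊆ GammaC C := by
  rintro ρ ⟨g, us, hSR, rfl⟩
  refine ⟨Γ0_subset_Γsat C (Or.inr (Or.inl ⟨g, us, hSR, rfl⟩)), fun hg => ?_⟩
  exfalso
  obtain ⟨t₀, ht⟩ := SR_liftB_mem hSR
  cases t₀ with
  | var n => cases ht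
  | app f₁ ts₁ =>
      rw [liftB_app] at ht
      cases ht
      cases hg

/-- All targets of saturated rules are states of `𝒞`. -/
lemma Γsat_target : ∀ ρ ∈ CSetup.Γsat C.toCSetup, ρ.2.2 ∈ CSetup.Qstates C.toCSetup := by
  have key : ∀ N, ∀ ρ ∈ iterΓ C N, ρ.2.2 ∈ CSetup.Qstates C.toCSetup := by
    intro N
    induction N with
    | zero =>
        rintro ρ (hA | hB)
        · exact Or.inl (C.hAstates ρ hA).1
        · rcases hB with ⟨g, us, hSR, rfl⟩ | ⟨g, rfl⟩
          · exact Or.inr ⟨Term.app g us, Or.inl ⟨Term.app g us, hSR, rfl⟩, rfl⟩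
          · exact Or.inr ⟨Term.var 0, Or.inr rfl, rfl⟩
    | succ N ih =>
        intro ρ hρ
        rw [iterΓ_succ] at hρ
        rcases hρ with hold | ⟨f, ls, r, θ, q, _, hθ, hRT, rfl⟩
        · exact ih ρ hold
        · exact reachesT_target hRT hθ ih
  intro ρ hρ
  rw [Γsat_eq_iUnion] at hρ
  obtain ⟨S, ⟨n, rfl⟩, h⟩ := hρ
  exact key n ρ h

/-- Backward simulation of a rewrite step by the clean saturated automaton. -/
lemma satBack (hlin : R.IsLinear) {u v : Term (Option F) (arB ar)} {q : Q}
    (hu : u.Ground) (hst : Rewrites R.liftB.rules u v)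
    (hv : Reaches (GammaC C) v q) : Reaches (GammaC C) u q := by
  classical
  obtain ⟨p, l, r, σ, hrule, hsub, hrep⟩ := hst
  obtain ⟨l₀, r₀, hmem, heq⟩ := mem_liftB_rules.1 hrule
  rw [Prod.mk.injEq] at heq
  obtain ⟨rfl, rfl⟩ := heq
  cases l₀ with
  | var n => exact absurd rfl (R.lhs_not_var (Term.var n, r₀) hmem n)
  | app f₀ ls₀ =>
  have hsub' : v.subtermAt p = some ((liftB r₀).subst σ) := Term.subtermAt_of_replaceAt hrep
  have hback : v.replaceAt p ((liftB (Term.app f₀ ls₀)).subst σ) = some u :=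
    Term.replaceAt_replaceAt hsub hrep
  obtain ⟨q', hq', hcont⟩ := reaches_decomp p v q _ hv hsub'
  have hrlin : (liftB r₀ : Term (Option F) (arB ar)).Linear :=
    linear_liftB (hlin.2 (Term.app f₀ ls₀, r₀) hmem)
  obtain ⟨θ₀, hθ₀, hRT⟩ := reaches_subst_decomp (liftB r₀) σ q' hq' hrlin
  set x₀ := C.enc (Term.var 0) with hx₀
  set rv := (liftB r₀ : Term (Option F) (arB ar)).vars with hrv
  set θ : ℕ → Q := fun n => if n ∈ rv then θ₀ n else x₀ with hθdef
  have hθeq : ∀ n ∈ rv, θ n = θ₀ n := fun n hn => by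
    rw [hθdef]; simp only [if_pos hn]
  have hRT' : ReachesT (GammaC C) θ (liftB r₀) q' := hRT.congr hθeq
  have hθQ : ∀ n ∈ rv, θ n ∈ CSetup.Qstates C.toCSetup := by
    intro n hn
    rw [hθeq n hn]
    obtain ⟨ρ, hρ, hq⟩ := reaches_target (hθ₀ n hn)
    rw [← hq]
    exact Γsat_target C _ (GammaC_subset_Γsat C hρ)
  -- the saturated rule
  obtain ⟨N, hN⟩ := reachesT_iUnion_chain (iterΓ_mono C)
    (show ReachesT (⋃ n, iterΓ C n) θ (liftB r₀) q' from
      (Γsat_eq_iUnion C) ▸ hRT'.mono (GammaC_subset_Γsat C))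
  have hlrule : ((liftB (Term.app f₀ ls₀) : Term (Option F) (arB ar)),
      (liftB r₀ : Term (Option F) (arB ar))) ∈ R.liftB.rules :=
    mem_liftB_rules.2 ⟨_, _, hmem, rfl⟩
  rw [liftB_app] at hlrule
  have hnew : (⟨some f₀, fun i => satArg C.enc θ rv (liftB (ls₀ i)), q'⟩ :
      TARule (Option F) (arB ar) Q) ∈ GammaC C := by
    refine ⟨?_, fun h => by simp at h⟩
    rw [Γsat_eq_iUnion]
    refine Set.mem_iUnion.2 ⟨N + 1, ?_⟩
    rw [iterΓ_succ]
    exact Or.inr ⟨some f₀, fun i => liftB (ls₀ i), liftB r₀, θ, q', hlrule, hθQ, hN, rfl⟩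
  -- the arguments reach the saturated states
  have hlg : ((liftB (Term.app f₀ ls₀) : Term (Option F) (arB ar)).subst σ).Ground :=
    Term.ground_subtermAt hu hsub
  have hargs : ∀ i, Reaches (GammaC C) ((liftB (ls₀ i)).subst σ)
      (satArg C.enc θ rv (liftB (ls₀ i))) := by
    intro i
    have hgi : ((liftB (ls₀ i) : Term (Option F) (arB ar)).subst σ).Ground := by
      rw [liftB_app] at hlg
      rw [show ((Term.app (some f₀) fun j => liftB (ls₀ j)).subst σ) =
        Term.app (some f₀) (fun j => (liftB (ls₀ j)).subst σ) from rfl,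
        Term.ground_app_iff] at hlg
      exact hlg i
    have hSR : (liftB (ls₀ i) : Term (Option F) (arB ar)) ∈ SR R.liftB :=
      SR_arg_of_lhs hlrule i
    cases hls : ls₀ i with
    | var n =>
        rw [hls] at hgi
        simp only [liftB_var, satArg, Term.subst]
        by_cases hn : n ∈ rv
        · rw [if_pos hn, hθeq n hn]
          exact hθ₀ n hn
        · rw [if_neg hn]
          exact ground_reaches_x0 (BProp_subset_GammaC C) hgi
    | app g us =>
        rw [hls] at hgi hSR
        rw [liftB_app]
        rw [liftB_app] at hgi hSR
        exact ginst_reaches (BProp_subset_GammaC C) (BMatch_subset_GammaC C) rfl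
          _ hSR σ hgi
  have hl : Reaches (GammaC C) ((liftB (Term.app f₀ ls₀)).subst σ) q' := by
    rw [liftB_app]
    exact Reaches.app hargs hnew
  exact hcont _ hl u hback

/-- Backward simulation of rewrite sequences (composed with the grounding
substitution mapping every variable to `•`). -/
lemma satBack_star (hlin : R.IsLinear) {u t : Term (Option F) (arB ar)} {q : Q}
    (hstar : RewritesStar R.liftB.rules u t)
    (ht : Reaches (GammaC C) (t.subst fun _ => bulletTm) q) :
    Reaches (GammaC C) (u.subst fun _ => bulletTm) q := by
  induction hstar using Relation.ReflTransGen.head_induction_on with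
  | refl => exact ht
  | head hstep _ ih =>
      refine satBack C hlin (Term.ground_subst fun _ => ground_bulletTm) ?_ ih
      obtain ⟨p, l, r, σ, hrule, hsub, hrep⟩ := hstep
      refine ⟨p, l, r, fun n => (σ n).subst fun _ => bulletTm, hrule, ?_, ?_⟩
      · rw [← Term.subst_subst]
        exact Term.subtermAt_subst _ hsub
      · rw [← Term.subst_subst]
        exact Term.replaceAt_subst _ hrep

end Saturation
/-! ### Matching left-hand sides -/

section Matching

variable {G : Type} {arG : G → ℕ}

/-- Combining substitutions for arguments with pairwise disjoint variables. -/
lemma combine_subst {k : ℕ} {us : Fin k → Term G arG} {ws : Fin k → Term G arG}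
    (hdisj : ∀ i j n, n ∈ (us i).vars → n ∈ (us j).vars → i = j)
    (h : ∀ i, ∃ σ, ws i = (us i).subst σ) :
    ∃ σ, ∀ i, ws i = (us i).subst σ := by
  classical
  choose σs hσs using h
  refine ⟨fun n => if h : ∃ i, n ∈ (us i).vars then σs h.choose n else Term.var n, fun i => ?_⟩
  rw [hσs i]
  refine (Term.subst_congr fun n hn => ?_).symm
  have hex : ∃ j, n ∈ (us j).vars := ⟨i, hn⟩
  simp only [dif_pos hex]
  rw [hdisj _ _ _ hex.choose_spec hn]

end Matching

section LhsMatchLemmas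

variable {F : Type} [Fintype F] {ar : F → ℕ} {Q : Type} [Fintype Q]
  {R : TRS F ar} (C : CpSetup Q R.liftB (TRS.NFset R.bullet))

lemma BProp_subset_Γ' : BProp C.enc ⊆ C.Γ' :=
  subset_trans (BProp_subset_GammaC C) (GammaC_subset_Γ' C)

lemma BMatch2_subset_Γ' : BMatch R.liftB C.enc2 ⊆ C.Γ' :=
  fun _ h => Or.inl (Or.inl (Or.inr h))

lemma mem_BStateSet_of_SR_app {l : Term (Option F) (arB ar)} (hl : l ∈ SR R.liftB)
    {g : Option F} {ls : Fin (arB ar g) → Term (Option F) (arB ar)}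
    (hlapp : l = Term.app g ls) : l ∈ BStateSet R.liftB :=
  Or.inl ⟨l, hl, by rw [hlapp]; rfl⟩

/-- Any `Γ'`-rule targeting a fresh state `⟪l⟫` (`l` not a variable) is a matching
rule of the fresh copy of `ℬ(ℛ)`. -/
lemma Γ'_rule_of_target_enc2 {l : Term (Option F) (arB ar)} (hl : l ∈ SR R.liftB)
    {g : Option F} {ls : Fin (arB ar g) → Term (Option F) (arB ar)}
    (hlapp : l = Term.app g ls) {ρ : TARule (Option F) (arB ar) Q}
    (hρ : ρ ∈ C.Γ') (htgt : ρ.2.2 = C.enc2 l) : ρ ∈ BMatch R.liftB C.enc2 := by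
  have hlB : l ∈ BStateSet R.liftB := mem_BStateSet_of_SR_app hl hlapp
  have hlmem : C.enc2 l ∈ C.enc2 '' (BStateSet R.liftB \ {Term.var 0}) := by
    refine ⟨l, ⟨hlB, ?_⟩, rfl⟩
    rw [hlapp]
    simp only [Set.mem_singleton_iff]
    exact fun h => nomatch h
  have hnotQ : C.enc2 l ∉ CSetup.Qstates C.toCSetup := by
    intro hmem
    have : C.enc2 l ∈ (C.enc2 '' (BStateSet R.liftB \ {Term.var 0}) ∪ {C.qr}) ∩
        (C.QA ∪ C.enc '' BStateSet R.liftB) := ⟨Or.inl hlmem, hmem⟩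
    rw [C.hfresh] at this
    exact this
  have hne_qr : C.enc2 l ≠ C.qr := by
    intro h
    exact C.hqr (h ▸ hlmem)
  rcases hρ with ((hsat | hBM) | hred) | hqp
  · exact absurd (htgt ▸ Γsat_target C ρ hsat) hnotQ
  · exact hBM
  · obtain ⟨f', ls', r', -, rfl⟩ := hred
    exact absurd (show C.enc2 l = C.qr from htgt.symm) hne_qr
  · obtain ⟨f', j, rfl⟩ := hqp
    exact absurd (show C.enc2 l = C.qr from htgt.symm) hne_qr

/-- A term reaching a fresh state `⟪l⟫` is an instance of `l`. -/
lemma instance_of_reaches_enc2 :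
    ∀ (l : Term (Option F) (arB ar)), l ∈ SR R.liftB → l.Linear →
    ∀ w, Reaches C.Γ' w (C.enc2 (stPattern l)) → ∃ σ, w = l.subst σ := by
  intro l
  induction l with
  | var n => exact fun _ _ w _ => ⟨fun _ => w, rfl⟩
  | app g ls ih =>
      intro hSR hlin w hw
      rw [show stPattern (Term.app g ls) = Term.app g ls from rfl] at hw
      cases hw with
      | @app g' ws qs _ hts hrule =>
          have hBM := Γ'_rule_of_target_enc2 C hSR rfl hrule rfl
          obtain ⟨g₁, us₁, hSR₁, heq⟩ := hBM
          injection heq with hg hrest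
          subst hg
          have hrest' := eq_of_heq hrest
          injection hrest' with hqs htgt
          have husl : Term.app g' us₁ = Term.app g ls :=
            C.henc2 (mem_BStateSet_of_SR_app hSR₁ rfl)
              (mem_BStateSet_of_SR_app hSR rfl) htgt.symm
          injection husl with hgg hls
          subst hgg
          have hls' := eq_of_heq hls
          rw [hls'] at hqs
          have hts' : ∀ i, Reaches C.Γ' (ws i) (C.enc2 (stPattern (ls i))) := by
            intro i
            have := hts i
            rw [hqs] at this
            exact this
          have hcomb : ∃ σ, ∀ i, ws i = (ls i).subst σ := by
            refine combine_subst (fun i j n hi hj => Term.linear_app_disjoint hlin hi hj) ?_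
            intro i
            exact ih i (SR_arg hSR i) (Term.linear_app hlin i) (ws i) (hts' i)
          obtain ⟨σ, hσ⟩ := hcomb
          refine ⟨σ, ?_⟩
          rw [show (Term.app g' ls).subst σ = Term.app g' (fun i => (ls i).subst σ) from rfl]
          exact congrArg _ (funext hσ)
  
/-- A lifted term that is an instance of a lifted linear pattern is an instance
over the original signature. -/
lemma unlift_instance :
    ∀ (l₀ : Term F ar) (σG : ℕ → Term (Option F) (arB ar)) (w : Term F ar),
      l₀.Linear → (liftB w : Term (Option F) (arB ar)) = (liftB l₀).subst σG →
      ∃ σF, w = l₀.subst σF := by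
  intro l₀
  induction l₀ with
  | var n => exact fun σG w _ _ => ⟨fun _ => w, rfl⟩
  | app f ls ih =>
      intro σG w hlin heq
      cases w with
      | var n => rw [liftB_app] at heq; cases heq
      | app g ts =>
          rw [liftB_app, liftB_app,
            show ((Term.app (some f) fun i => liftB (ls i)).subst σG) =
              Term.app (some f) (fun i => (liftB (ls i)).subst σG) from rfl] at heq
          injection heq with hg hts
          injection hg with hg
          subst hg
          have hts' := eq_of_heq hts
          have hinst : ∀ i, ∃ σF, ts i = (ls i).subst σF := by
            intro i
            refine ih i σG (ts i) (Term.linear_app hlin i) ?_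
            exact congrFun hts' i
          obtain ⟨σF, hσF⟩ := combine_subst
            (fun i j n hi hj => Term.linear_app_disjoint hlin hi hj) hinst
          refine ⟨σF, ?_⟩
          rw [show (Term.app g ls).subst σF = Term.app g (fun i => (ls i).subst σF) from rfl]
          exact congrArg _ (funext hσF)

/-- A ground redex matches: `⟪lᵢ⟫ ∈ tᵢ↓` for the matched left-hand side. -/
lemma lhsMatch_of_redex {f : F} {ts : Fin (ar f) → Term F ar}
    (hg : (Term.app f ts : Term F ar).Ground) (hred : R.IsRedex (Term.app f ts)) :
    LhsMatch R.liftB C.enc2 (some f) (fun i => dn C.Γ' (liftB (ts i))) := by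
  obtain ⟨⟨l, r⟩, hmem, σ, heq⟩ := hred
  cases l with
  | var n => exact absurd rfl (R.lhs_not_var (Term.var n, r) hmem n)
  | app f₀ ls₀ =>
      rw [show (Term.app f₀ ls₀).subst σ = Term.app f₀ (fun i => (ls₀ i).subst σ) from rfl]
        at heq
      injection heq with hf hts
      subst hf
      have hts' := eq_of_heq hts
      have hlrule : ((liftB (Term.app f ls₀) : Term (Option F) (arB ar)),
          (liftB r : Term (Option F) (arB ar))) ∈ R.liftB.rules :=
        mem_liftB_rules.2 ⟨_, _, hmem, rfl⟩
      rw [liftB_app] at hlrule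
      refine ⟨fun i => liftB (ls₀ i), liftB r, hlrule, fun i => ?_⟩
      have hti : ts i = (ls₀ i).subst σ := congrFun hts' i
      have hgl : ((liftB (ls₀ i) : Term (Option F) (arB ar)).subst
          (fun n => liftB (σ n))).Ground := by
        rw [← liftB_subst, ← hti]
        exact ground_liftB (Term.ground_app_iff.1 hg i)
      have := ginst_reaches (BProp_subset_Γ' C) (BMatch2_subset_Γ' C) C.hx
        (liftB (ls₀ i)) (SR_arg_of_lhs hlrule i) (fun n => liftB (σ n)) hgl
      show Reaches C.Γ' (liftB (ts i)) _
      rw [hti, liftB_subst]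
      exact this

/-- Conversely, a matching ground term is a redex. -/
lemma redex_of_lhsMatch (hlin : R.IsLinear) {f : F} {ts : Fin (ar f) → Term F ar}
    (hmatch : LhsMatch R.liftB C.enc2 (some f) (fun i => dn C.Γ' (liftB (ts i)))) :
    R.IsRedex (Term.app f ts) := by
  obtain ⟨ls, r, hrule, hmem⟩ := hmatch
  obtain ⟨l₀, r₀, hmem₀, heq₀⟩ := mem_liftB_rules.1 hrule
  rw [Prod.mk.injEq] at heq₀
  obtain ⟨heql, -⟩ := heq₀
  cases l₀ with
  | var n => exact absurd rfl (R.lhs_not_var (Term.var n, r₀) hmem₀ n)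
  | app f₀ ls₀ =>
      rw [liftB_app] at heql
      injection heql with hf hls
      injection hf with hf
      subst hf
      have hls' := eq_of_heq hls
      subst hls'
      have hl₀lin : (Term.app f ls₀).Linear := hlin.1 (Term.app f ls₀, r₀) hmem₀
      have hinst : ∀ i, ∃ σG, (liftB (ts i) : Term (Option F) (arB ar)) =
          (liftB (ls₀ i)).subst σG := by
        intro i
        refine instance_of_reaches_enc2 C (liftB (ls₀ i)) (SR_arg_of_lhs hrule i)
          (linear_liftB (Term.linear_app hl₀lin i)) (liftB (ts i)) ?_
        exact hmem i
      have hdisj : ∀ i j n, n ∈ (liftB (ls₀ i) : Term (Option F) (arB ar)).vars →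
          n ∈ (liftB (ls₀ j) : Term (Option F) (arB ar)).vars → i = j := by
        intro i j n hi hj
        rw [vars_liftB] at hi hj
        exact Term.linear_app_disjoint hl₀lin hi hj
      obtain ⟨σG, hσG⟩ := combine_subst hdisj hinst
      have hwhole : (liftB (Term.app f ts) : Term (Option F) (arB ar)) =
          (liftB (Term.app f ls₀)).subst σG := by
        rw [liftB_app, liftB_app,
          show ((Term.app (some f) fun i => liftB (ls₀ i)).subst σG) =
            Term.app (some f) (fun i => (liftB (ls₀ i)).subst σG) from rfl]
        exact congrArg _ (funext hσG)
      obtain ⟨σF, hσF⟩ := unlift_instance (Term.app f ls₀) σG (Term.app f ts)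
        hl₀lin hwhole
      exact ⟨(Term.app f ls₀, r₀), hmem₀, σF, hσF⟩

/-- In the clean automaton, `•` reaches only `⟨x⟩`. -/
lemma bullet_reaches_GammaC {q : Q} (h : Reaches (GammaC C) bulletTm q) :
    q = C.enc (Term.var 0) := by
  cases h with
  | app _ hrule => exact hrule.2 rfl

end LhsMatchLemmas
/-! ### The main induction -/

section Main

variable {F : Type} [Fintype F] {ar : F → ℕ} {Q : Type} [Fintype Q]
  {R : TRS F ar} (C : CpSetup Q R.liftB (TRS.NFset R.bullet))

lemma main_reaches (hlin : R.IsLinear) :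
    ∀ (s : Term F ar), s.Ground → ∀ (qf : List ℕ → Q),
    (∀ p, R.RedexPos s p →
        ∀ u, (liftB s : Term (Option F) (arB ar)).replaceAt p bulletTm = some u →
        Reaches (GammaC C) u (qf p)) →
    Reaches (DTrans R.liftB C.Γ' C.enc C.enc2) s
      (dn C.Γ' (liftB s), {q | ∃ p, R.RedexPos s p ∧ q = qf p}) := by
  intro s
  induction s with
  | var n => exact fun hg => absurd hg (Term.not_ground_var n)
  | app f ts ih =>
    intro hg qf hq
    classical
    have redexFin : ∀ (i : Fin (ar f)) (p' : List ℕ),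
        R.RedexPos (ts i) p' ↔ R.RedexPos (Term.app f ts) (i.val :: p') := by
      intro i p'
      rw [redexPos_cons]
      constructor
      · intro h; exact ⟨i.isLt, by rw [Fin.eta]; exact h⟩
      · rintro ⟨h, hh⟩; rwa [Fin.eta] at hh
    -- decomposing the runs provided by `hq` at the root
    have key : ∀ (i : Fin (ar f)) (p' : List ℕ), R.RedexPos (ts i) p' →
        ∃ qs : Fin (ar f) → Q,
          (∀ j, j ≠ i → Reaches (GammaC C) (liftB (ts j)) (qs j)) ∧
          (∀ u', (liftB (ts i) : Term (Option F) (arB ar)).replaceAt p' bulletTm = some u' →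
              Reaches (GammaC C) u' (qs i)) ∧
          (⟨some f, qs, qf (i.val :: p')⟩ : TARule (Option F) (arB ar) Q) ∈ GammaC C := by
      intro i p' hp'
      obtain ⟨w, hw, hwr⟩ := hp'
      have hwl : (liftB (ts i) : Term (Option F) (arB ar)).subtermAt p' = some (liftB w) :=
        subtermAt_liftB hw
      obtain ⟨u', hu'⟩ := Term.replaceAt_isSome hwl bulletTm
      have hredex : R.RedexPos (Term.app f ts) (i.val :: p') :=
        (redexFin i p').1 ⟨w, hw, hwr⟩
      have hrep : (liftB (Term.app f ts) : Term (Option F) (arB ar)).replaceAt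
          (i.val :: p') bulletTm =
          some (Term.app (some f) (Function.update (fun j => liftB (ts j)) i u')) := by
        rw [liftB_app]
        simp only [Term.replaceAt]
        rw [dif_pos (show i.val < arB ar (some f) from i.isLt)]
        show Option.map _ ((liftB (ts i)).replaceAt p' bulletTm) = _
        rw [hu', Option.map_some]
        rfl
      have hrun := hq (i.val :: p') hredex _ hrep
      cases hrun with
      | app hts hrule =>
          rename_i qs
          refine ⟨qs, ?_, ?_, hrule⟩
          · intro j hj
            have := hts j
            rwa [Function.update_of_ne (α := Fin (arB ar (some f))) hj] at this
          · intro u'' hu''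
            have heq : u'' = u' := by
              rw [hu'] at hu''
              exact (Option.some.inj hu'').symm
            subst heq
            have := hts i
            simp [Function.update, Fin.ext_iff] at this
            exact (congrArg (fun v => Reaches (GammaC C) v (qs i)) (if_pos (rfl : (i : Fin (arB ar (some f))) = i))).mp this
    choose qsF hqs1 hqs2 hqs3 using key
    -- the target functions for the children
    obtain ⟨qfi, hqfi⟩ : ∃ qfi : Fin (ar f) → List ℕ → Q,
        ∀ i p' (h : R.RedexPos (ts i) p'), qfi i p' = qsF i p' h i :=
      ⟨fun i p' => if h : R.RedexPos (ts i) p' then qsF i p' h i else C.enc (Term.var 0),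
        fun i p' h => dif_pos h⟩
    -- the children runs from the induction hypothesis
    have hchild : ∀ i : Fin (ar f),
        Reaches (DTrans R.liftB C.Γ' C.enc C.enc2) (ts i)
          (dn C.Γ' (liftB (ts i)), {q | ∃ p', R.RedexPos (ts i) p' ∧ q = qfi i p'}) := by
      intro i
      refine ih i (Term.ground_app_iff.1 hg i) (qfi i) ?_
      intro p' hp' u' hu'
      rw [hqfi i p' hp']
      exact hqs2 i p' hp' u' hu'
    -- the state sets
    have hS : dn C.Γ' (liftB (Term.app f ts)) =
        oneStep C.Γ' (some f) (fun i => dn C.Γ' (liftB (ts i))) := by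
      rw [liftB_app, dn_app]
    by_cases hroot : R.RedexPos (Term.app f ts) []
    case pos =>
      have hx0 : qf [] = C.enc (Term.var 0) := by
        have hb : (liftB (Term.app f ts) : Term (Option F) (arB ar)).replaceAt []
            bulletTm = some bulletTm := by simp only [Term.replaceAt]
        exact bullet_reaches_GammaC C (hq [] hroot bulletTm hb)
      have hP : {q | ∃ p, R.RedexPos (Term.app f ts) p ∧ q = qf p} =
          ({q | ∃ (i : Fin (ar f)) (p' : List ℕ), R.RedexPos (ts i) p' ∧
            q = qf (i.val :: p')} ∪ {C.enc (Term.var 0)} : Set Q) := by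
        ext q
        constructor
        · rintro ⟨p, hp, rfl⟩
          cases p with
          | nil => exact Or.inr (by rw [hx0]; rfl)
          | cons j p' =>
              obtain ⟨hj, hp'⟩ := redexPos_cons.1 hp
              exact Or.inl ⟨⟨j, hj⟩, p', hp', rfl⟩
        · rintro (⟨i, p', hp', rfl⟩ | h2)
          · exact ⟨i.val :: p', (redexFin i p').1 hp', rfl⟩
          · exact ⟨[], hroot, by rw [hx0]; exact h2⟩
      rw [hP, hS]
      refine Reaches.app (fun i => hchild i) ?_
      refine ⟨f, fun i => (dn C.Γ' (liftB (ts i)),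
          {q | ∃ p', R.RedexPos (ts i) p' ∧ q = qfi i p'}),
        {q | ∃ (i : Fin (ar f)) (p' : List ℕ), R.RedexPos (ts i) p' ∧
            q = qf (i.val :: p')},
        {C.enc (Term.var 0)}, ?_, ?_, ?_, rfl⟩
      · rintro q ⟨i, p', hp', rfl⟩
        refine Set.mem_iUnion.2 ⟨i, qsF i p' hp', fun j => ?_,
          GammaC_subset_Γ' C (hqs3 i p' hp')⟩
        by_cases hj : j = i
        · subst hj
          beta_reduce
          refine (congrArg (qsF j p' hp' j ∈ ·) (if_pos (rfl : (j : Fin (ar f)) = j))).mpr ?_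
          exact ⟨p', hp', (hqfi j p' hp').symm⟩
        · beta_reduce
          refine (congrArg (qsF i p' hp' j ∈ ·) (if_neg (show ¬ ((j : Fin (ar f)) = i) from hj))).mpr ?_
          exact Reaches.mono (GammaC_subset_Γ' C) (hqs1 i p' hp' j hj)
      · rintro i q ⟨p', hp', rfl⟩
        refine ⟨qf (i.val :: p'), ⟨i, p', hp', rfl⟩, qsF i p' hp', fun j => ?_,
          GammaC_subset_Γ' C (hqs3 i p' hp')⟩
        by_cases hj : j = i
        · subst hj
          beta_reduce
          refine (congrArg (qsF j p' hp' j ∈ ·) (if_pos (rfl : (j : Fin (ar f)) = j))).mpr ?_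
          exact (hqfi j p' hp').symm
        · beta_reduce
          refine (congrArg (qsF i p' hp' j ∈ ·) (if_neg (show ¬ ((j : Fin (ar f)) = i) from hj))).mpr ?_
          exact Reaches.mono (GammaC_subset_Γ' C) (hqs1 i p' hp' j hj)
      · exact Or.inl ⟨lhsMatch_of_redex C hg (redexPos_nil.1 hroot), rfl⟩
    case neg =>
      have hP : {q | ∃ p, R.RedexPos (Term.app f ts) p ∧ q = qf p} =
          ({q | ∃ (i : Fin (ar f)) (p' : List ℕ), R.RedexPos (ts i) p' ∧
            q = qf (i.val :: p')} ∪ (∅ : Set Q)) := by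
        ext q
        constructor
        · rintro ⟨p, hp, rfl⟩
          cases p with
          | nil => exact absurd hp hroot
          | cons j p' =>
              obtain ⟨hj, hp'⟩ := redexPos_cons.1 hp
              exact Or.inl ⟨⟨j, hj⟩, p', hp', rfl⟩
        · rintro (⟨i, p', hp', rfl⟩ | h2)
          · exact ⟨i.val :: p', (redexFin i p').1 hp', rfl⟩
          · exact absurd h2 (Set.notMem_empty q)
      rw [hP, hS]
      refine Reaches.app (fun i => hchild i) ?_
      refine ⟨f, fun i => (dn C.Γ' (liftB (ts i)),
          {q | ∃ p', R.RedexPos (ts i) p' ∧ q = qfi i p'}),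
        {q | ∃ (i : Fin (ar f)) (p' : List ℕ), R.RedexPos (ts i) p' ∧
            q = qf (i.val :: p')},
        (∅ : Set Q), ?_, ?_, ?_, rfl⟩
      · rintro q ⟨i, p', hp', rfl⟩
        refine Set.mem_iUnion.2 ⟨i, qsF i p' hp', fun j => ?_,
          GammaC_subset_Γ' C (hqs3 i p' hp')⟩
        by_cases hj : j = i
        · subst hj
          beta_reduce
          refine (congrArg (qsF j p' hp' j ∈ ·) (if_pos (rfl : (j : Fin (ar f)) = j))).mpr ?_
          exact ⟨p', hp', (hqfi j p' hp').symm⟩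
        · beta_reduce
          refine (congrArg (qsF i p' hp' j ∈ ·) (if_neg (show ¬ ((j : Fin (ar f)) = i) from hj))).mpr ?_
          exact Reaches.mono (GammaC_subset_Γ' C) (hqs1 i p' hp' j hj)
      · rintro i q ⟨p', hp', rfl⟩
        refine ⟨qf (i.val :: p'), ⟨i, p', hp', rfl⟩, qsF i p' hp', fun j => ?_,
          GammaC_subset_Γ' C (hqs3 i p' hp')⟩
        by_cases hj : j = i
        · subst hj
          beta_reduce
          refine (congrArg (qsF j p' hp' j ∈ ·) (if_pos (rfl : (j : Fin (ar f)) = j))).mpr ?_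
          exact (hqfi j p' hp').symm
        · beta_reduce
          refine (congrArg (qsF i p' hp' j ∈ ·) (if_neg (show ¬ ((j : Fin (ar f)) = i) from hj))).mpr ?_
          exact Reaches.mono (GammaC_subset_Γ' C) (hqs1 i p' hp' j hj)
      · exact Or.inr ⟨fun hm => hroot (redexPos_nil.2 (redex_of_lhsMatch C hlin hm)), rfl⟩

end Main
/-- Let `ℛ` be a linear growing TRS over `𝓕` and `𝒟(ℛ)` the
powerset-pair automaton built from `𝒞'_{NF_{ℛ•}}(ℛ)`.  If `s[•]_p ∈ (→_ℛ*)[NF_{ℛ•}]`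
for every redex position `p` of `s`, then there is a set `P ⊆ Q_f` such that
`s →_{Γ_𝒟}* [S,P]` with `S = s↓`. -/
theorem statement10 {F : Type} [Fintype F] {ar : F → ℕ} {Q : Type} [Fintype Q]
    (R : TRS F ar) (hlin : R.IsLinear) (hgrow : R.Growing)
    (C : CpSetup Q R.liftB (TRS.NFset R.bullet))
    (s : Term F ar) (hs : s.Ground)
    (hall : ∀ p, R.RedexPos s p →
        ∃ u, (liftB s).replaceAt p bulletTm = some u ∧
          ∃ t ∈ TRS.NFset R.bullet, RewritesStar R.liftB.rules u t) :
    ∃ P ⊆ C.A.final,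
      Reaches (DTrans R.liftB C.Γ' C.enc C.enc2) s (dn C.Γ' (liftB s), P) := by
  classical
  have hqex : ∀ p, R.RedexPos s p → ∃ qq, qq ∈ C.A.final ∧
      ∀ u, (liftB s : Term (Option F) (arB ar)).replaceAt p bulletTm = some u →
        Reaches (GammaC C) u qq := by
    intro p hp
    obtain ⟨u, hu, t, htNF, hstar⟩ := hall p hp
    have htLang : t ∈ Lang C.A := by rw [← C.hT]; exact htNF
    obtain ⟨htg, qq, hqfin, hrun⟩ := htLang
    have hrun1 : Reaches (CSetup.Γsat C.toCSetup) t qq :=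
      Reaches.mono (fun ρ h => Γ0_subset_Γsat C (Or.inl h)) hrun
    have hrun2 : Reaches (GammaC C) t qq :=
      reaches_of_noBullet (C := fun ρ => ρ.2.2 = C.enc (Term.var 0))
        (noBullet_of_NF htNF) hrun1
    have hug : u.Ground := Term.ground_replaceAt (ground_liftB hs) ground_bulletTm hu
    have hstar' : Reaches (GammaC C) u qq := by
      have := satBack_star C hlin hstar (by rw [Term.subst_ground htg]; exact hrun2)
      rwa [Term.subst_ground hug] at this
    refine ⟨qq, hqfin, fun u' hu' => ?_⟩
    have : u = u' := Option.some.inj (hu.symm.trans hu')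
    rwa [← this]
  obtain ⟨qf, hqf⟩ : ∃ qf : List ℕ → Q, ∀ p, R.RedexPos s p →
      qf p ∈ C.A.final ∧ ∀ u, (liftB s : Term (Option F) (arB ar)).replaceAt p
        bulletTm = some u → Reaches (GammaC C) u (qf p) :=
    ⟨fun p => if h : R.RedexPos s p then (hqex p h).choose else C.enc (Term.var 0),
      fun p h => by simp only [dif_pos h]; exact (hqex p h).choose_spec⟩
  refine ⟨{q | ∃ p, R.RedexPos s p ∧ q = qf p}, ?_, ?_⟩
  · rintro q ⟨p, hp, rfl⟩
    exact (hqf p hp).1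
  · exact main_reaches C hlin s hs qf (fun p hp u hu => (hqf p hp).2 u hu)
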